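/- arXiv:1212.2943 — 6 statements merged into one kernel-verified Lean document; each statement's English description precedes it below -/
import Mathlib

section
/- For all m > 0 and t > 0, 0 ≤ ∫_{ℝ^d} ( exp(-(|ξ|² + (mt)^{2/α})^{α/2} + mt) - exp(-|ξ|^α) ) dξ ≤ e^{mt} (α/2) (mt)^{2/α} ∫_{ℝ^d} e^{-|ξ|^α} |ξ|^{α-2} dξ + (e^{mt} - 1) ∫_{ℝ^d} e^{-|ξ|^α} dξ, all integrals being finite since d ≥ 2. -/
open MeasureTheory Real Set

section Aux

open MeasureTheory.Measure Metric

theorem aux_rpow_add_le {a b p : ℝ} (ha : 0 ≤ a) (hb : 0 ≤ b) (hp : 0 ≤ p) (hp1 : p ≤ 1) :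
    (a + b) ^ p ≤ a ^ p + b ^ p := by
  have h := NNReal.rpow_add_le_add_rpow a.toNNReal b.toNNReal hp hp1
  rw [← Real.toNNReal_add ha hb] at h
  have h2 := NNReal.coe_le_coe.2 h
  rwa [NNReal.coe_add, NNReal.coe_rpow, NNReal.coe_rpow, NNReal.coe_rpow,
    Real.coe_toNNReal _ (add_nonneg ha hb), Real.coe_toNNReal _ ha, Real.coe_toNNReal _ hb] at h2

theorem aux_integrableOn_rpow_mul_exp_neg_rpow {p q : ℝ} (hp : 0 < p) (hq : -1 < q) :
    IntegrableOn (fun x : ℝ => x ^ q * Real.exp (-x ^ p)) (Ioi 0) := by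
  have h0 : (0:ℝ) < (q + 1) / p := div_pos (by linarith) hp
  have hG := Real.GammaIntegral_convergent h0
  have h2 := (integrableOn_Ioi_comp_rpow_iff'
    (fun x => Real.exp (-x) * x ^ ((q + 1) / p - 1)) hp.ne').2 hG
  refine h2.congr_fun (fun x hx => ?_) measurableSet_Ioi
  have hx0 : (0:ℝ) < x := hx
  have key : x ^ (p - 1) * x ^ (q + 1 - p) = x ^ q := by
    rw [← Real.rpow_add hx0]; norm_num
  beta_reduce
  rw [smul_eq_mul, ← Real.rpow_mul hx0.le,
    show p * ((q + 1) / p - 1) = q + 1 - p by field_simp,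
    mul_comm (Real.exp _), ← mul_assoc, key]

theorem aux_integrable_fun_norm {E : Type*} [NormedAddCommGroup E] [NormedSpace ℝ E]
    [MeasurableSpace E] [BorelSpace E] [FiniteDimensional ℝ E] [Nontrivial E]
    (μ : Measure E) [μ.IsAddHaarMeasure] {f : ℝ → ℝ}
    (hf : IntegrableOn (fun y => y ^ (Module.finrank ℝ E - 1) * f y) (Ioi (0:ℝ))) :
    Integrable (fun x => f ‖x‖) μ := by
  set n := Module.finrank ℝ E - 1 with hn
  have h1 : Integrable ((fun y : ℝ => y ^ n * f y) ∘ (Subtype.val : Ioi (0:ℝ) → ℝ))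
      (Measure.comap Subtype.val volume) := by
    rw [← (MeasurableEmbedding.subtype_coe (measurableSet_Ioi (a := (0:ℝ)))).integrable_map_iff,
      map_comap_subtype_coe measurableSet_Ioi]
    exact hf
  have h2 : Integrable (fun y : Ioi (0:ℝ) => f y) (Measure.volumeIoiPow n) := by
    rw [Measure.volumeIoiPow, integrable_withDensity_iff
      ((measurable_subtype_coe.pow_const n).ennreal_ofReal)
      (Filter.Eventually.of_forall fun y => ENNReal.ofReal_lt_top)]
    refine h1.congr (Filter.Eventually.of_forall fun y => ?_)
    simp only [Function.comp]
    rw [ENNReal.toReal_ofReal (pow_nonneg (le_of_lt y.2) n), mul_comm]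
  have h3 : Integrable (fun p : Metric.sphere (0:E) 1 × Ioi (0:ℝ) => f p.2)
      ((μ.toSphere).prod (Measure.volumeIoiPow n)) := by
    have := (integrable_const (1:ℝ) (μ := μ.toSphere)).mul_prod h2
    simpa using this
  have h4 : Integrable (fun x : ({0}ᶜ : Set E) => f ‖(x:E)‖) (Measure.comap Subtype.val μ) := by
    have h := ((μ.measurePreserving_homeomorphUnitSphereProd).integrable_comp_emb
      (Homeomorph.measurableEmbedding _)).2 h3
    refine h.congr (Filter.Eventually.of_forall fun x => ?_)
    simp [homeomorphUnitSphereProd]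
  have h5 : IntegrableOn (fun x : E => f ‖x‖) ({0}ᶜ) μ := by
    rw [IntegrableOn, ← map_comap_subtype_coe (measurableSet_singleton (0:E)).compl,
      (MeasurableEmbedding.subtype_coe (measurableSet_singleton (0:E)).compl).integrable_map_iff]
    exact h4
  rwa [IntegrableOn, restrict_compl_singleton] at h5

end Aux

/-- For all `m > 0` and `t > 0`, the integral
`∫ (exp(-(|ξ|²+(mt)^{2/α})^{α/2} + mt) - exp(-|ξ|^α)) dξ` is nonnegative and bounded by
`e^{mt} (α/2)(mt)^{2/α} ∫ e^{-|ξ|^α}|ξ|^{α-2} dξ + (e^{mt}-1) ∫ e^{-|ξ|^α} dξ`,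
all the integrals being finite since `d ≥ 2`. -/
theorem integral_diff_exp_bounds (d : ℕ) (hd : 2 ≤ d) (α : ℝ) (hα₀ : 0 < α) (hα₂ : α < 2)
    (m t : ℝ) (hm : 0 < m) (ht : 0 < t) :
    Integrable (fun ξ : EuclideanSpace ℝ (Fin d) => Real.exp (-‖ξ‖ ^ α) * ‖ξ‖ ^ (α - 2))
      ∧ Integrable (fun ξ : EuclideanSpace ℝ (Fin d) => Real.exp (-‖ξ‖ ^ α))
      ∧ Integrable (fun ξ : EuclideanSpace ℝ (Fin d) =>
          Real.exp (-((‖ξ‖ ^ (2 : ℝ) + (m * t) ^ ((2 : ℝ) / α)) ^ (α / 2)) + m * t)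
            - Real.exp (-‖ξ‖ ^ α))
      ∧ 0 ≤ ∫ ξ : EuclideanSpace ℝ (Fin d),
            (Real.exp (-((‖ξ‖ ^ (2 : ℝ) + (m * t) ^ ((2 : ℝ) / α)) ^ (α / 2)) + m * t)
              - Real.exp (-‖ξ‖ ^ α))
      ∧ (∫ ξ : EuclideanSpace ℝ (Fin d),
            (Real.exp (-((‖ξ‖ ^ (2 : ℝ) + (m * t) ^ ((2 : ℝ) / α)) ^ (α / 2)) + m * t)
              - Real.exp (-‖ξ‖ ^ α)))
          ≤ Real.exp (m * t) * (α / 2) * (m * t) ^ ((2 : ℝ) / α) *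
              (∫ ξ : EuclideanSpace ℝ (Fin d), Real.exp (-‖ξ‖ ^ α) * ‖ξ‖ ^ (α - 2))
            + (Real.exp (m * t) - 1) *
              (∫ ξ : EuclideanSpace ℝ (Fin d), Real.exp (-‖ξ‖ ^ α)) := by
  have hd1 : 1 ≤ d := by omega
  haveI : Nonempty (Fin d) := ⟨⟨0, by omega⟩⟩
  haveI : Nontrivial (EuclideanSpace ℝ (Fin d)) := by infer_instance
  have hfr : Module.finrank ℝ (EuclideanSpace ℝ (Fin d)) = d := finrank_euclideanSpace_fin
  have hs : 0 < m * t := mul_pos hm ht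
  set a : ℝ := (m * t) ^ ((2 : ℝ) / α) with ha_def
  have ha : 0 < a := Real.rpow_pos_of_pos hs _
  have hkey : a ^ (α / 2) = m * t := by
    rw [ha_def, ← Real.rpow_mul hs.le, show (2 : ℝ) / α * (α / 2) = 1 by
      field_simp, Real.rpow_one]
  -- first integrability
  have hI1 : Integrable (fun ξ : EuclideanSpace ℝ (Fin d) =>
      Real.exp (-‖ξ‖ ^ α) * ‖ξ‖ ^ (α - 2)) := by
    apply aux_integrable_fun_norm (μ := volume) (f := fun y => Real.exp (-y ^ α) * y ^ (α - 2))
    rw [hfr]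
    have base := aux_integrableOn_rpow_mul_exp_neg_rpow (p := α) (q := (d : ℝ) - 1 + (α - 2))
      hα₀ (by
        have h2 : (2:ℝ) ≤ d := by exact_mod_cast hd
        linarith)
    refine base.congr_fun (fun x hx => ?_) measurableSet_Ioi
    have hx0 : (0:ℝ) < x := hx
    beta_reduce
    rw [Real.rpow_add hx0]
    have hnat : x ^ ((d : ℝ) - 1) = x ^ (d - 1 : ℕ) := by
      rw [← Real.rpow_natCast x (d - 1)]
      congr 1
      push_cast [hd1]
      ring
    rw [hnat]; ring
  -- second integrability
  have hI2 : Integrable (fun ξ : EuclideanSpace ℝ (Fin d) => Real.exp (-‖ξ‖ ^ α)) := by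
    apply aux_integrable_fun_norm (μ := volume) (f := fun y => Real.exp (-y ^ α))
    rw [hfr]
    have base := aux_integrableOn_rpow_mul_exp_neg_rpow (p := α) (q := (d : ℝ) - 1)
      hα₀ (by
        have h2 : (2:ℝ) ≤ d := by exact_mod_cast hd
        linarith)
    refine base.congr_fun (fun x hx => ?_) measurableSet_Ioi
    have hx0 : (0:ℝ) < x := hx
    rw [← Real.rpow_natCast x (d - 1)]
    congr 2
    push_cast [hd1]
    ring
  -- pointwise facts
  have hsq : ∀ ξ : EuclideanSpace ℝ (Fin d), (‖ξ‖ ^ (2:ℝ)) ^ (α / 2) = ‖ξ‖ ^ α := by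
    intro ξ
    rw [← Real.rpow_mul (norm_nonneg _), show (2:ℝ) * (α / 2) = α by ring]
  have hmono : ∀ ξ : EuclideanSpace ℝ (Fin d),
      ‖ξ‖ ^ α ≤ (‖ξ‖ ^ (2:ℝ) + a) ^ (α / 2) := by
    intro ξ
    rw [← hsq ξ]
    exact Real.rpow_le_rpow (Real.rpow_nonneg (norm_nonneg _) _)
      (le_add_of_nonneg_right ha.le) (by positivity)
  have hsub : ∀ ξ : EuclideanSpace ℝ (Fin d),
      (‖ξ‖ ^ (2:ℝ) + a) ^ (α / 2) ≤ ‖ξ‖ ^ α + m * t := by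
    intro ξ
    calc (‖ξ‖ ^ (2:ℝ) + a) ^ (α / 2) ≤ (‖ξ‖ ^ (2:ℝ)) ^ (α / 2) + a ^ (α / 2) :=
          aux_rpow_add_le (Real.rpow_nonneg (norm_nonneg _) _) ha.le (by positivity)
            (by linarith)
      _ = ‖ξ‖ ^ α + m * t := by rw [hsq, hkey]
  have hF0 : ∀ ξ : EuclideanSpace ℝ (Fin d),
      0 ≤ Real.exp (-((‖ξ‖ ^ (2 : ℝ) + a) ^ (α / 2)) + m * t) - Real.exp (-‖ξ‖ ^ α) := by
    intro ξ
    rw [sub_nonneg]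
    apply Real.exp_le_exp.2
    have := hsub ξ
    linarith
  have hFle : ∀ ξ : EuclideanSpace ℝ (Fin d),
      Real.exp (-((‖ξ‖ ^ (2 : ℝ) + a) ^ (α / 2)) + m * t) - Real.exp (-‖ξ‖ ^ α)
        ≤ (Real.exp (m * t) - 1) * Real.exp (-‖ξ‖ ^ α) := by
    intro ξ
    have h1 : Real.exp (-((‖ξ‖ ^ (2 : ℝ) + a) ^ (α / 2)) + m * t)
        ≤ Real.exp (m * t) * Real.exp (-‖ξ‖ ^ α) := by
      rw [← Real.exp_add]
      apply Real.exp_le_exp.2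
      have := hmono ξ
      linarith
    linarith
  -- third integrability
  have hcont : Continuous (fun ξ : EuclideanSpace ℝ (Fin d) =>
      Real.exp (-((‖ξ‖ ^ (2 : ℝ) + a) ^ (α / 2)) + m * t) - Real.exp (-‖ξ‖ ^ α)) := by
    have hc1 : Continuous fun ξ : EuclideanSpace ℝ (Fin d) => (‖ξ‖ ^ (2:ℝ) + a) ^ (α / 2) := by
      apply Continuous.rpow_const
      · exact (continuous_norm.rpow_const fun x => Or.inr (by norm_num)).add continuous_const
      · intro x
        right
        positivity
    have hc2 : Continuous fun ξ : EuclideanSpace ℝ (Fin d) => ‖ξ‖ ^ α :=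
      continuous_norm.rpow_const fun x => Or.inr hα₀.le
    exact (Real.continuous_exp.comp (hc1.neg.add continuous_const)).sub
      (Real.continuous_exp.comp hc2.neg)
  have hI3 : Integrable (fun ξ : EuclideanSpace ℝ (Fin d) =>
      Real.exp (-((‖ξ‖ ^ (2 : ℝ) + a) ^ (α / 2)) + m * t) - Real.exp (-‖ξ‖ ^ α)) := by
    apply Integrable.mono' (hI2.const_mul (Real.exp (m * t) - 1))
      hcont.aestronglyMeasurable
    refine Filter.Eventually.of_forall fun ξ => ?_
    rw [Real.norm_eq_abs, abs_of_nonneg (hF0 ξ)]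
    exact hFle ξ
  refine ⟨hI1, hI2, hI3, integral_nonneg hF0, ?_⟩
  have hb : (∫ ξ : EuclideanSpace ℝ (Fin d),
      (Real.exp (-((‖ξ‖ ^ (2 : ℝ) + a) ^ (α / 2)) + m * t) - Real.exp (-‖ξ‖ ^ α)))
      ≤ ∫ ξ : EuclideanSpace ℝ (Fin d), (Real.exp (m * t) - 1) * Real.exp (-‖ξ‖ ^ α) :=
    integral_mono hI3 (hI2.const_mul _) hFle
  rw [integral_const_mul] at hb
  have hpos1 : 0 ≤ ∫ ξ : EuclideanSpace ℝ (Fin d), Real.exp (-‖ξ‖ ^ α) * ‖ξ‖ ^ (α - 2) :=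
    integral_nonneg fun ξ => by positivity
  have hc : 0 ≤ Real.exp (m * t) * (α / 2) * a := by positivity
  nlinarith [mul_nonneg hc hpos1]
end

section
/- Fix m > 0 and let k be the largest integer such that k < 2/α. Then there exist constants C > 0 and t₀ > 0 such that for all 0 < t < t₀, | p^m(t,0) - p^0(t,0) - t^{-d/α} (ω_d Γ(d/α)/((2π)^d α)) Σ_{n=1}^{k} (m^n/n!) t^n | ≤ C t^{(2-d)/α}, where ω_d = 2π^{d/2}/Γ(d/2). In other words, p^m(t,x,x) - p^0(t,x,x) = t^{-d/α} (ω_d Γ(d/α)/((2π)^d α)) Σ_{n=1}^{k} (m^n/n!) t^n + O(t^{2/α} t^{-d/α}). -/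
open MeasureTheory Real Set Finset


lemma myIntOn {p q b : ℝ} (hp : 0 < p) (hq : -1 < q) (hb : 0 < b) :
    IntegrableOn (fun x : ℝ => x ^ q * Real.exp (-(b * x ^ p))) (Ioi (0:ℝ)) := by
  set s : ℝ := (q + 1) / p with hs
  have hs0 : 0 < s := div_pos (by linarith) hp
  have h1 : IntegrableOn (fun x : ℝ => Real.exp (-x) * x ^ (s - 1)) (Ioi (0:ℝ)) :=
    Real.GammaIntegral_convergent hs0
  have h2 : IntegrableOn (fun x : ℝ => Real.exp (-(b*x)) * (b*x) ^ (s - 1)) (Ioi (0:ℝ)) := by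
    have := (integrableOn_Ioi_comp_mul_left_iff
      (fun x : ℝ => Real.exp (-x) * x ^ (s - 1)) 0 hb).mpr (by simpa using h1)
    simpa using this
  have h3 : IntegrableOn (fun x : ℝ => x ^ (s-1) * Real.exp (-(b*x))) (Ioi (0:ℝ)) := by
    refine IntegrableOn.congr_fun (h2.smul ((b:ℝ) ^ (1-s))) (fun x hx => ?_) measurableSet_Ioi
    have hx0 : (0:ℝ) < x := hx
    rw [Pi.smul_apply, smul_eq_mul, mul_rpow hb.le hx0.le,
      show b ^ (1-s) * (Real.exp (-(b*x)) * (b ^ (s-1) * x ^ (s-1)))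
        = (b ^ (1-s) * b ^ (s-1)) * (x ^ (s-1) * Real.exp (-(b*x))) by ring,
      ← Real.rpow_add hb]
    norm_num
  have h4 := (integrableOn_Ioi_comp_rpow_iff'
      (fun x : ℝ => x ^ (s-1) * Real.exp (-(b*x))) (p := p) hp.ne').mpr h3
  refine IntegrableOn.congr_fun h4 (fun x hx => ?_) measurableSet_Ioi
  have hx0 : (0:ℝ) < x := hx
  have hps : p * s = q + 1 := by rw [hs, mul_div_cancel₀ _ hp.ne']
  have he : p - 1 + p * (s - 1) = q := by rw [mul_sub, mul_one, hps]; ring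
  rw [smul_eq_mul, ← Real.rpow_mul hx0.le,
    show x ^ (p-1) * (x ^ (p*(s-1)) * Real.exp (-(b * x ^ p)))
      = (x ^ (p-1) * x ^ (p*(s-1))) * Real.exp (-(b * x ^ p)) by ring,
    ← Real.rpow_add hx0, he]

lemma myBernoulli {α x c : ℝ} (hα₀ : 0 < α) (hα₂ : α < 2) (hx : 0 < x) (hc : 0 ≤ c) :
    (x + c) ^ (α/2) ≤ x ^ (α/2) + (α/2) * c * x ^ (α/2 - 1) := by
  have hcx : (0:ℝ) ≤ c / x := by positivity
  have h := rpow_one_add_le_one_add_mul_self (s := c/x) (by linarith)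
    (p := α/2) (by linarith) (by linarith)
  calc (x + c) ^ (α/2) = (x * (1 + c/x)) ^ (α/2) := by
        rw [mul_add, mul_one, mul_div_cancel₀ _ hx.ne']
    _ = x ^ (α/2) * (1 + c/x) ^ (α/2) := mul_rpow hx.le (by linarith)
    _ ≤ x ^ (α/2) * (1 + (α/2) * (c/x)) :=
        mul_le_mul_of_nonneg_left h (rpow_nonneg hx.le _)
    _ = x ^ (α/2) + (α/2) * c * (x ^ (α/2) * x⁻¹) := by field_simp
    _ = x ^ (α/2) + (α/2) * c * x ^ (α/2 - 1) := by
        rw [Real.rpow_sub hx, Real.rpow_one]; ring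

lemma myMono {α t c y : ℝ} (hα₀ : 0 < α) (ht : 0 < t) (hc : 0 ≤ c) (hy : 0 < y) :
    t * y ^ α ≤ t * (y ^ (2:ℝ) + c) ^ (α/2) := by
  have h1 : y ^ α = (y ^ (2:ℝ)) ^ (α/2) := by
    rw [← Real.rpow_mul hy.le]; congr 1; ring
  rw [h1]
  refine mul_le_mul_of_nonneg_left
    (Real.rpow_le_rpow (by positivity) (by linarith) (by linarith)) ht.le

lemma myPtBound {α t c y : ℝ} (hα₀ : 0 < α) (hα₂ : α < 2) (ht : 0 < t) (hc : 0 ≤ c)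
    (hy : 0 < y) :
    Real.exp (-(t * y ^ α)) - Real.exp (-(t * (y ^ (2:ℝ) + c) ^ (α/2))) ≤
      t * (α/2) * c * y ^ (α - 2) * Real.exp (-(t * y ^ α)) := by
  set a := t * y ^ α with ha
  set b := t * (y ^ (2:ℝ) + c) ^ (α/2) with hb
  have hab : a ≤ b := myMono hα₀ ht hc hy
  have h1 : Real.exp (-a) - Real.exp (-b) ≤ (b - a) * Real.exp (-a) := by
    have h2 : 1 - (b - a) ≤ Real.exp (-(b-a)) := by
      have := Real.add_one_le_exp (-(b-a)); linarith
    have h3 : Real.exp (-b) = Real.exp (-a) * Real.exp (-(b-a)) := by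
      rw [← Real.exp_add]; ring_nf
    nlinarith [Real.exp_pos (-a)]
  have h4 : b - a ≤ t * ((α/2) * c * y ^ (α - 2)) := by
    have hx2 : (0:ℝ) < y ^ (2:ℝ) := Real.rpow_pos_of_pos hy _
    have h5 := myBernoulli hα₀ hα₂ hx2 hc
    have h6 : (y ^ (2:ℝ)) ^ (α/2) = y ^ α := by
      rw [← Real.rpow_mul hy.le]; congr 1; ring
    have h7 : (y ^ (2:ℝ)) ^ (α/2 - 1) = y ^ (α - 2) := by
      rw [← Real.rpow_mul hy.le]; congr 1; ring
    rw [h6, h7] at h5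
    rw [ha, hb, ← mul_sub]
    exact mul_le_mul_of_nonneg_left (by linarith) ht.le
  nlinarith [Real.exp_pos (-a), Real.exp_nonneg (-a)]

lemma myJ0 (d : ℕ) (hd : 2 ≤ d) {α t : ℝ} (hα₀ : 0 < α) (ht : 0 < t) :
    ∫ y in Ioi (0:ℝ), y ^ ((d:ℝ) - 1) * Real.exp (-(t * y ^ α)) =
      t ^ (-((d:ℝ)/α)) * ((1/α) * Real.Gamma ((d:ℝ)/α)) := by
  have hd1 : (2:ℝ) ≤ (d:ℝ) := by exact_mod_cast hd
  have h := integral_rpow_mul_exp_neg_mul_rpow (p := α) (q := (d:ℝ) - 1) (b := t)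
    hα₀ (by linarith) ht
  simp only [neg_mul] at h
  rw [h]
  rw [show (d:ℝ) - 1 + 1 = (d:ℝ) by ring, neg_div]
  ring

lemma myJ0' (d : ℕ) (hd : 2 ≤ d) {α t : ℝ} (hα₀ : 0 < α) (ht : 0 < t) :
    ∫ y in Ioi (0:ℝ), y ^ ((d:ℝ) - 1) *
        Real.exp (-(t * (y ^ (2:ℝ) + (0:ℝ) ^ ((2:ℝ)/α)) ^ (α/2))) =
      t ^ (-((d:ℝ)/α)) * ((1/α) * Real.Gamma ((d:ℝ)/α)) := by
  rw [← myJ0 d hd hα₀ ht]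
  refine setIntegral_congr_fun measurableSet_Ioi (fun y hy => ?_)
  have hy0 : (0:ℝ) < y := hy
  rw [Real.zero_rpow (by positivity), add_zero, ← Real.rpow_mul hy0.le,
    show 2 * (α/2) = α by ring]

lemma myJh (d : ℕ) (hd : 2 ≤ d) {α t : ℝ} (hα₀ : 0 < α) (ht : 0 < t) :
    ∫ y in Ioi (0:ℝ), y ^ ((d:ℝ) + α - 3) * Real.exp (-(t * y ^ α)) =
      t ^ (-(((d:ℝ) + α - 2)/α)) * ((1/α) * Real.Gamma (((d:ℝ) + α - 2)/α)) := by
  have hd1 : (2:ℝ) ≤ (d:ℝ) := by exact_mod_cast hd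
  have h := integral_rpow_mul_exp_neg_mul_rpow (p := α) (q := (d:ℝ) + α - 3) (b := t)
    hα₀ (by linarith) ht
  simp only [neg_mul] at h
  rw [h, show (d:ℝ) + α - 3 + 1 = (d:ℝ) + α - 2 by ring, neg_div]
  ring


/-- The transition density `p^m(t,x)` of the relativistic `α`-stable process with mass `m`. -/
noncomputable def relDensity (d : ℕ) (α m t : ℝ) (x : EuclideanSpace ℝ (Fin d)) : ℝ :=
  (2 * Real.pi) ^ (-(d : ℝ)) *
    (∫ ξ : EuclideanSpace ℝ (Fin d),
      Complex.exp (-(Complex.I * ((inner ℝ ξ x : ℝ) : ℂ)) -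
        ((t * ((‖ξ‖ ^ (2 : ℝ) + m ^ ((2 : ℝ) / α)) ^ (α / 2) - m) : ℝ) : ℂ))).re

lemma relDensity_eq (d : ℕ) (hd : 2 ≤ d) (α m t : ℝ) :
    relDensity d α m t 0 =
      (2 * Real.pi) ^ (-(d : ℝ)) * (Real.exp (t * m) *
        (((d : ℝ) * (volume (Metric.ball (0 : EuclideanSpace ℝ (Fin d)) 1)).toReal) *
          ∫ y in Ioi (0:ℝ), y ^ ((d:ℝ) - 1) *
            Real.exp (-(t * (y ^ (2:ℝ) + m ^ ((2:ℝ)/α)) ^ (α/2))))) := by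
  have hd0 : 0 < d := by omega
  haveI : Nontrivial (EuclideanSpace ℝ (Fin d)) := by
    refine ⟨⟨0, EuclideanSpace.single ⟨0, hd0⟩ 1, fun h => ?_⟩⟩
    have := congrArg (fun v : EuclideanSpace ℝ (Fin d) => v ⟨0, hd0⟩) h
    simp [EuclideanSpace.single] at this
  unfold relDensity
  congr 1
  have h1 : ∀ ξ : EuclideanSpace ℝ (Fin d),
      Complex.exp (-(Complex.I * ((inner ℝ ξ (0 : EuclideanSpace ℝ (Fin d)) : ℝ) : ℂ)) -
        ((t * ((‖ξ‖ ^ (2 : ℝ) + m ^ ((2 : ℝ) / α)) ^ (α / 2) - m) : ℝ) : ℂ)) =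
      ((Real.exp (t * m) *
        Real.exp (-(t * (‖ξ‖ ^ (2:ℝ) + m ^ ((2:ℝ)/α)) ^ (α/2))) : ℝ) : ℂ) := by
    intro ξ
    rw [inner_zero_right]
    rw [Complex.ofReal_zero, mul_zero, neg_zero, zero_sub, ← Complex.ofReal_neg,
      ← Complex.ofReal_exp, ← Real.exp_add]
    congr 2
    ring
  simp only [h1]
  have hco : (∫ ξ : EuclideanSpace ℝ (Fin d),
      ((Real.exp (t * m) *
        Real.exp (-(t * (‖ξ‖ ^ (2:ℝ) + m ^ ((2:ℝ)/α)) ^ (α/2))) : ℝ) : ℂ)) =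
      ((∫ ξ : EuclideanSpace ℝ (Fin d), Real.exp (t * m) *
        Real.exp (-(t * (‖ξ‖ ^ (2:ℝ) + m ^ ((2:ℝ)/α)) ^ (α/2))) : ℝ) : ℂ) := integral_ofReal
  rw [hco, Complex.ofReal_re, MeasureTheory.integral_const_mul]
  congr 1
  have h2 := MeasureTheory.integral_fun_norm_addHaar (volume : Measure (EuclideanSpace ℝ (Fin d)))
    (fun r : ℝ => Real.exp (-(t * (r ^ (2:ℝ) + m ^ ((2:ℝ)/α)) ^ (α/2))))
  rw [h2]
  rw [finrank_euclideanSpace_fin]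
  rw [nsmul_eq_mul, smul_eq_mul]
  rw [show ((d:ℝ) * (volume (Metric.ball (0 : EuclideanSpace ℝ (Fin d)) 1)).toReal) *
      (∫ y in Ioi (0:ℝ), y ^ ((d:ℝ) - 1) *
        Real.exp (-(t * (y ^ (2:ℝ) + m ^ ((2:ℝ)/α)) ^ (α/2)))) =
      (d:ℝ) * ((volume (Metric.ball (0 : EuclideanSpace ℝ (Fin d)) 1)).toReal *
      (∫ y in Ioi (0:ℝ), y ^ ((d:ℝ) - 1) *
        Real.exp (-(t * (y ^ (2:ℝ) + m ^ ((2:ℝ)/α)) ^ (α/2))))) by ring]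
  congr 1
  congr 1
  refine setIntegral_congr_fun measurableSet_Ioi (fun y hy => ?_)
  have hy0 : (0:ℝ) < y := hy
  rw [smul_eq_mul]
  congr 1
  rw [← Real.rpow_natCast y (d - 1), Nat.cast_sub hd0, Nat.cast_one]

/-- For `k` the largest integer with `k < 2/α`,
`p^m(t,0) - p^0(t,0) = t^{-d/α} (ω_d Γ(d/α)/((2π)^d α)) Σ_{n=1}^k (m^n/n!) t^n
  + O(t^{2/α} t^{-d/α})` as `t → 0⁺`. -/
theorem relDensity_diff_expansion (d : ℕ) (hd : 2 ≤ d) (α : ℝ) (hα₀ : 0 < α) (hα₂ : α < 2)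
    (m : ℝ) (hm : 0 < m) (k : ℕ) (hk₁ : (k : ℝ) < 2 / α) (hk₂ : 2 / α ≤ (k : ℝ) + 1) :
    ∃ C > 0, ∃ t₀ > 0, ∀ t : ℝ, 0 < t → t < t₀ →
      |relDensity d α m t 0 - relDensity d α 0 t 0
          - t ^ (-((d : ℝ) / α)) *
              ((2 * Real.pi ^ ((d : ℝ) / 2) / Real.Gamma ((d : ℝ) / 2)) *
                Real.Gamma ((d : ℝ) / α) / ((2 * Real.pi) ^ d * α)) *
              ∑ n ∈ Finset.Icc 1 k, m ^ n / (n.factorial : ℝ) * t ^ n|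
        ≤ C * t ^ ((2 - (d : ℝ)) / α) := by
  have hd2 : (2:ℝ) ≤ (d:ℝ) := by exact_mod_cast hd
  have hd0 : (0:ℝ) < (d:ℝ) := by linarith
  set c : ℝ := m ^ ((2:ℝ)/α) with hcdef
  have hc : 0 < c := Real.rpow_pos_of_pos hm _
  have hGda : 0 < Real.Gamma ((d:ℝ)/α) := Real.Gamma_pos_of_pos (by positivity)
  have hGd2 : 0 < Real.Gamma ((d:ℝ)/2) := Real.Gamma_pos_of_pos (by positivity)
  have hGh : 0 < Real.Gamma (((d:ℝ)+α-2)/α) := Real.Gamma_pos_of_pos (div_pos (by linarith) hα₀)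
  set A : ℝ := (1/α) * Real.Gamma ((d:ℝ)/α) with hAdef
  have hA : 0 < A := by positivity
  set K : ℝ := (α/2) * c * ((1/α) * Real.Gamma (((d:ℝ)+α-2)/α)) with hKdef
  have hK : 0 < K := by positivity
  set B : ℝ := m^(k+1) * (((k:ℝ)+2)/(((k+1).factorial : ℝ) * ((k:ℝ)+1))) with hBdef
  have hB : 0 < B := by positivity
  set V : ℝ := (d:ℝ) * (volume (Metric.ball (0 : EuclideanSpace ℝ (Fin d)) 1)).toReal with hVdef
  have hV : 0 < V := by
    refine mul_pos hd0 (ENNReal.toReal_pos ?_ measure_ball_lt_top.ne)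
    exact (Metric.measure_ball_pos volume (0 : EuclideanSpace ℝ (Fin d)) one_pos).ne'
  set P : ℝ := (2 * Real.pi) ^ (-(d:ℝ)) with hPdef
  have hP : 0 < P := Real.rpow_pos_of_pos (by positivity) _
  refine ⟨P * V * (B * A + Real.exp m * K), by positivity, min 1 m⁻¹, by positivity,
    fun t ht ht₀ => ?_⟩
  have ht1 : t < 1 := lt_of_lt_of_le ht₀ (min_le_left _ _)
  have htm : t * m < 1 := by
    have h := lt_of_lt_of_le ht₀ (min_le_right _ _)
    calc t * m < m⁻¹ * m := by exact mul_lt_mul_of_pos_right h hm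
    _ = 1 := inv_mul_cancel₀ hm.ne'
  -- the radial integrals
  set J : ℝ := ∫ y in Ioi (0:ℝ), y ^ ((d:ℝ)-1) * Real.exp (-(t * (y^(2:ℝ)+c)^(α/2))) with hJdef
  have hJ0val : (∫ y in Ioi (0:ℝ), y ^ ((d:ℝ)-1) * Real.exp (-(t * y^α))) =
      t ^ (-((d:ℝ)/α)) * A := myJ0 d hd hα₀ ht
  -- representations
  have hrm : relDensity d α m t 0 = P * (Real.exp (t*m) * (V * J)) := by
    rw [hPdef, hVdef, hJdef, hcdef]
    exact relDensity_eq d hd α m t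
  have hr0 : relDensity d α 0 t 0 = P * (V * (t ^ (-((d:ℝ)/α)) * A)) := by
    have h := relDensity_eq d hd α 0 t
    rw [myJ0' d hd hα₀ ht, mul_zero, Real.exp_zero, one_mul] at h
    rw [hPdef, hVdef, hAdef]
    exact h
  -- integrability
  have hg0int : IntegrableOn (fun y : ℝ => y ^ ((d:ℝ)-1) * Real.exp (-(t * y^α))) (Ioi 0) :=
    myIntOn hα₀ (by linarith) ht
  have hmeasJ : AEStronglyMeasurable
      (fun y : ℝ => y ^ ((d:ℝ)-1) * Real.exp (-(t * (y^(2:ℝ)+c)^(α/2))))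
      (volume.restrict (Ioi 0)) := by
    have h1 : Continuous fun y : ℝ => y ^ ((d:ℝ)-1) :=
      Real.continuous_rpow_const (by linarith)
    have h2 : Continuous fun y : ℝ => (y^(2:ℝ)+c)^(α/2) :=
      (Real.continuous_rpow_const (by linarith)).comp
        ((Real.continuous_rpow_const (by norm_num)).add continuous_const)
    exact (h1.mul (Real.continuous_exp.comp ((continuous_const.mul h2).neg))).aestronglyMeasurable
  have hJint : IntegrableOn
      (fun y : ℝ => y ^ ((d:ℝ)-1) * Real.exp (-(t * (y^(2:ℝ)+c)^(α/2)))) (Ioi 0) := by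
    refine Integrable.mono hg0int hmeasJ ?_
    refine (ae_restrict_iff' measurableSet_Ioi).mpr (Filter.Eventually.of_forall fun y hy => ?_)
    have hy0 : (0:ℝ) < y := hy
    rw [Real.norm_eq_abs, Real.norm_eq_abs, abs_of_nonneg (by positivity),
      abs_of_nonneg (by positivity)]
    exact mul_le_mul_of_nonneg_left
      (Real.exp_le_exp.mpr (neg_le_neg (myMono hα₀ ht hc.le hy0))) (by positivity)
  have hJnonneg : 0 ≤ J :=
    setIntegral_nonneg measurableSet_Ioi fun y hy => by
    have hy0 : (0:ℝ) < y := hy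
    positivity
  have hJleJ0 : J ≤ t ^ (-((d:ℝ)/α)) * A := by
    rw [← hJ0val, hJdef]
    refine setIntegral_mono_on hJint hg0int measurableSet_Ioi fun y hy => ?_
    have hy0 : (0:ℝ) < y := hy
    exact mul_le_mul_of_nonneg_left
      (Real.exp_le_exp.mpr (neg_le_neg (myMono hα₀ ht hc.le hy0))) (by positivity)
  have hhint : IntegrableOn (fun y : ℝ => y ^ ((d:ℝ)+α-3) * Real.exp (-(t * y^α))) (Ioi 0) :=
    myIntOn hα₀ (by linarith) ht
  -- exponent arithmetic
  have hexp1 : t * t ^ (-(((d:ℝ)+α-2)/α)) = t ^ ((2-(d:ℝ))/α) := by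
    nth_rewrite 1 [← Real.rpow_one t]
    rw [← Real.rpow_add ht]
    congr 1
    field_simp
    ring
  have hexp2 : t ^ ((2:ℝ)/α) * t ^ (-((d:ℝ)/α)) = t ^ ((2-(d:ℝ))/α) := by
    rw [← Real.rpow_add ht]
    congr 1
    ring
  -- difference bound
  have hdiffle : t ^ (-((d:ℝ)/α)) * A - J ≤ K * t ^ ((2-(d:ℝ))/α) := by
    rw [← hJ0val, hJdef]
    rw [← integral_sub hg0int hJint]
    have hstep : (∫ y in Ioi (0:ℝ),
        (y ^ ((d:ℝ)-1) * Real.exp (-(t * y^α)) -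
          y ^ ((d:ℝ)-1) * Real.exp (-(t * (y^(2:ℝ)+c)^(α/2))))) ≤
        ∫ y in Ioi (0:ℝ), (t*(α/2)*c) * (y ^ ((d:ℝ)+α-3) * Real.exp (-(t * y^α))) := by
      refine setIntegral_mono_on (hg0int.sub hJint) (hhint.const_mul _) measurableSet_Ioi
        fun y hy => ?_
      have hy0 : (0:ℝ) < y := hy
      have h3 := myPtBound hα₀ hα₂ ht hc.le hy0
      have h4 : y ^ ((d:ℝ)-1) * (y ^ (α-2)) = y ^ ((d:ℝ)+α-3) := by
        rw [← Real.rpow_add hy0]; congr 1; ring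
      calc y ^ ((d:ℝ)-1) * Real.exp (-(t * y^α)) -
            y ^ ((d:ℝ)-1) * Real.exp (-(t * (y^(2:ℝ)+c)^(α/2)))
          = y ^ ((d:ℝ)-1) *
            (Real.exp (-(t * y^α)) - Real.exp (-(t * (y^(2:ℝ)+c)^(α/2)))) := by ring
        _ ≤ y ^ ((d:ℝ)-1) * (t*(α/2)*c * y^(α-2) * Real.exp (-(t * y^α))) :=
            mul_le_mul_of_nonneg_left h3 (by positivity)
        _ = (t*(α/2)*c) * (y ^ ((d:ℝ)-1) * (y ^ (α-2)) * Real.exp (-(t * y^α))) := by ring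
        _ = (t*(α/2)*c) * (y ^ ((d:ℝ)+α-3) * Real.exp (-(t * y^α))) := by rw [h4]
    refine hstep.trans (le_of_eq ?_)
    rw [MeasureTheory.integral_const_mul, myJh d hd hα₀ ht]
    rw [show (t*(α/2)*c) * (t ^ (-(((d:ℝ)+α-2)/α)) * ((1/α) * Real.Gamma (((d:ℝ)+α-2)/α)))
        = ((α/2) * c * ((1/α) * Real.Gamma (((d:ℝ)+α-2)/α))) * (t * t ^ (-(((d:ℝ)+α-2)/α)))
      by ring, hexp1, hKdef]
  -- Taylor bound
  set S : ℝ := ∑ n ∈ Finset.Icc 1 k, m^n/(n.factorial:ℝ) * t^n with hSdef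
  have hSnonneg : 0 ≤ S :=
    Finset.sum_nonneg fun n _ => by positivity
  have hsumsplit : ∀ x : ℝ, ∑ i ∈ Finset.range (k+1), x^i / (i.factorial:ℝ) =
      1 + ∑ n ∈ Finset.Icc 1 k, x^n / (n.factorial:ℝ) := by
    intro x
    rw [Finset.range_eq_Ico, Finset.sum_eq_sum_Ico_succ_bot (Nat.succ_pos k), Nat.succ_eq_add_one, Finset.Ico_add_one_right_eq_Icc]
    norm_num
  have hSle : 1 + S ≤ Real.exp m := by
    have h1 : S ≤ ∑ n ∈ Finset.Icc 1 k, m^n/(n.factorial:ℝ) := by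
      refine Finset.sum_le_sum fun n _ => ?_
      exact mul_le_of_le_one_right (by positivity) (pow_le_one₀ ht.le ht1.le)
    have h3 := Real.sum_le_exp_of_nonneg hm.le (k+1)
    rw [hsumsplit m] at h3
    linarith
  have htaylor : |Real.exp (t*m) - (1 + S)| ≤ B * t ^ ((2:ℝ)/α) := by
    have h := Real.exp_bound (x := t*m)
      (by rw [abs_of_nonneg (by positivity)]; exact htm.le) (Nat.succ_pos k)
    have hsum : ∑ i ∈ Finset.range (k+1), (t*m)^i / (i.factorial:ℝ) = 1 + S := by
      rw [hsumsplit (t*m), hSdef]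
      congr 1
      refine Finset.sum_congr rfl fun n _ => ?_
      rw [mul_pow]; ring
    rw [hsum] at h
    have hrhs : |t*m| ^ (k+1) * (((k+1:ℕ).succ : ℝ) / (((k+1).factorial : ℝ) * ((k+1:ℕ) : ℝ)))
        = B * t ^ (k+1) := by
      rw [abs_of_nonneg (by positivity), mul_pow, hBdef]
      push_cast
      ring
    rw [hrhs] at h
    refine h.trans ?_
    have hpow : t ^ (k+1) = t ^ (((k:ℝ)+1)) := by
      rw [← Real.rpow_natCast t (k+1)]
      push_cast
      ring_nf
    rw [hpow]
    exact mul_le_mul_of_nonneg_left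
      (Real.rpow_le_rpow_of_exponent_ge ht ht1.le hk₂) hB.le
  -- constant identity
  have hVval : V = 2 * Real.pi ^ ((d:ℝ)/2) / Real.Gamma ((d:ℝ)/2) := by
    haveI : Nonempty (Fin d) := ⟨⟨0, by omega⟩⟩
    have hvol := EuclideanSpace.volume_ball (Fin d) (0 : EuclideanSpace ℝ (Fin d)) 1
    rw [Fintype.card_fin] at hvol
    have hnn : (0:ℝ) ≤ Real.sqrt Real.pi ^ d / Real.Gamma ((d:ℝ)/2 + 1) := by
      have : 0 < Real.Gamma ((d:ℝ)/2 + 1) := Real.Gamma_pos_of_pos (by positivity)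
      positivity
    have htoReal : (volume (Metric.ball (0 : EuclideanSpace ℝ (Fin d)) 1)).toReal =
        Real.sqrt Real.pi ^ d / Real.Gamma ((d:ℝ)/2 + 1) := by
      rw [hvol]
      simp [ENNReal.toReal_ofReal hnn]
    have hsq : Real.sqrt Real.pi ^ d = Real.pi ^ ((d:ℝ)/2) := by
      rw [Real.sqrt_eq_rpow, ← Real.rpow_natCast (Real.pi ^ ((1:ℝ)/2)) d,
        ← Real.rpow_mul Real.pi_pos.le]
      congr 1
      ring
    have hgam : Real.Gamma ((d:ℝ)/2 + 1) = ((d:ℝ)/2) * Real.Gamma ((d:ℝ)/2) :=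
      Real.Gamma_add_one (by positivity)
    rw [hVdef, htoReal, hsq, hgam]
    field_simp
  have hW : (2 * Real.pi ^ ((d:ℝ)/2) / Real.Gamma ((d:ℝ)/2)) * Real.Gamma ((d:ℝ)/α) /
      ((2 * Real.pi) ^ d * α) = P * (V * A) := by
    rw [hVval, hPdef, hAdef, Real.rpow_neg (by positivity), Real.rpow_natCast]
    have h2pi : (0:ℝ) < (2 * Real.pi) ^ d := by positivity
    field_simp
  -- main estimate
  have hkey : |Real.exp (t*m) * J - (t ^ (-((d:ℝ)/α)) * A) * (1 + S)| ≤
      (B * A + Real.exp m * K) * t ^ ((2-(d:ℝ))/α) := by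
    have e1 : Real.exp (t*m) * J - (t ^ (-((d:ℝ)/α)) * A) * (1 + S) =
        (Real.exp (t*m) - (1 + S)) * J + (1 + S) * (J - t ^ (-((d:ℝ)/α)) * A) := by ring
    rw [e1]
    refine (abs_add_le _ _).trans ?_
    have hX : |(Real.exp (t*m) - (1 + S)) * J| ≤ (B * t ^ ((2:ℝ)/α)) * (t ^ (-((d:ℝ)/α)) * A) := by
      rw [abs_mul, abs_of_nonneg hJnonneg]
      exact mul_le_mul htaylor hJleJ0 hJnonneg (by positivity)
    have hY : |(1 + S) * (J - t ^ (-((d:ℝ)/α)) * A)| ≤ Real.exp m * (K * t ^ ((2-(d:ℝ))/α)) := by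
      rw [abs_mul, abs_of_nonneg (by linarith), abs_of_nonpos (by linarith), neg_sub]
      refine mul_le_mul hSle (by linarith) (by linarith) (Real.exp_nonneg m)
    have hXe : (B * t ^ ((2:ℝ)/α)) * (t ^ (-((d:ℝ)/α)) * A) = (B * A) * t ^ ((2-(d:ℝ))/α) := by
      rw [show (B * t ^ ((2:ℝ)/α)) * (t ^ (-((d:ℝ)/α)) * A)
          = (B * A) * (t ^ ((2:ℝ)/α) * t ^ (-((d:ℝ)/α))) by ring, hexp2]
    rw [hXe] at hX
    calc _ ≤ (B * A) * t ^ ((2-(d:ℝ))/α) + Real.exp m * (K * t ^ ((2-(d:ℝ))/α)) :=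
          add_le_add hX hY
      _ = (B * A + Real.exp m * K) * t ^ ((2-(d:ℝ))/α) := by ring
  -- finish
  rw [hrm, hr0, hW]
  rw [show P * (Real.exp (t*m) * (V * J)) - P * (V * (t ^ (-((d:ℝ)/α)) * A)) -
      t ^ (-((d:ℝ)/α)) * (P * (V * A)) * S =
      (P * V) * (Real.exp (t*m) * J - (t ^ (-((d:ℝ)/α)) * A) * (1 + S)) by ring]
  rw [abs_mul, abs_of_nonneg (by positivity)]
  calc (P * V) * |Real.exp (t*m) * J - (t ^ (-((d:ℝ)/α)) * A) * (1 + S)|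
      ≤ (P * V) * ((B * A + Real.exp m * K) * t ^ ((2-(d:ℝ))/α)) :=
        mul_le_mul_of_nonneg_left hkey (by positivity)
    _ = P * V * (B * A + Real.exp m * K) * t ^ ((2-(d:ℝ))/α) := by ring
end

section
/- Fix 0 < L < M < ∞. Then p^m(t,x) converges uniformly to p^0(t,x) on [L,M] × ℝ^d as m → 0⁺: for every ε > 0 there exists m₀ > 0 such that for all 0 < m ≤ m₀, all t ∈ [L,M] and all x ∈ ℝ^d, | p^m(t,x) - p^0(t,x) | < ε. -/
open MeasureTheory Real Set

private lemma my_rpow_add_le {a b p : ℝ} (ha : 0 ≤ a) (hb : 0 ≤ b) (hp0 : 0 ≤ p) (hp1 : p ≤ 1) :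
    (a + b) ^ p ≤ a ^ p + b ^ p := by
  lift a to NNReal using ha
  lift b to NNReal using hb
  have := NNReal.rpow_add_le_add_rpow a b hp0 hp1
  exact_mod_cast this

private lemma my_exp_neg_le {y : ℝ} (n : ℕ) (hn : 0 < n) (hy : 0 < y) :
    Real.exp (-y) ≤ ((n : ℝ) / y) ^ n := by
  have h1 : (y / n) ^ n ≤ Real.exp y := by
    have h2 : y / n ≤ Real.exp (y / n) := (le_add_of_nonneg_left zero_le_one).trans
      (by linarith [Real.add_one_le_exp (y / n)])
    calc (y / n) ^ n ≤ (Real.exp (y / n)) ^ n :=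
          pow_le_pow_left₀ (by positivity) h2 n
      _ = Real.exp (n * (y / n)) := (Real.exp_nat_mul _ n).symm
      _ = Real.exp y := by rw [mul_div_cancel₀]; positivity
  have hyn : 0 < (y / n) ^ n := by positivity
  rw [Real.exp_neg]
  calc (Real.exp y)⁻¹ ≤ ((y / n) ^ n)⁻¹ := by
        apply inv_anti₀ hyn h1
    _ = ((n : ℝ) / y) ^ n := by
        rw [← inv_pow, inv_div]

private lemma my_key_bound {c α : ℝ} (hc : 0 < c) (hα : 0 < α) (r : ℝ) (hr : 0 < r)
    {n : ℕ} (hn : 0 < n) (hnα : r ≤ n * α) {s : ℝ} (hs : 0 ≤ s) :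
    Real.exp (-(c * s ^ α)) * (1 + s) ^ r ≤ 2 ^ r * max 1 (((n : ℝ) / c) ^ n) := by
  rcases le_total s 1 with h1 | h1
  · have e1 : Real.exp (-(c * s ^ α)) ≤ 1 := by
      rw [Real.exp_le_one_iff]
      have : 0 ≤ c * s ^ α := by positivity
      linarith
    have e2 : (1 + s) ^ r ≤ 2 ^ r := by
      apply Real.rpow_le_rpow (by linarith) (by linarith) hr.le
    calc Real.exp (-(c * s ^ α)) * (1 + s) ^ r ≤ 1 * 2 ^ r :=
          mul_le_mul e1 e2 (by positivity) zero_le_one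
      _ = 2 ^ r * 1 := by ring
      _ ≤ 2 ^ r * max 1 (((n : ℝ) / c) ^ n) := by
          apply mul_le_mul_of_nonneg_left (le_max_left _ _) (by positivity)
  · have hs0 : 0 < s := lt_of_lt_of_le one_pos h1
    have hsa : 0 < s ^ α := Real.rpow_pos_of_pos hs0 α
    have e1 : Real.exp (-(c * s ^ α)) ≤ ((n : ℝ) / c) ^ n * s ^ (-(n * α)) := by
      calc Real.exp (-(c * s ^ α)) ≤ ((n : ℝ) / (c * s ^ α)) ^ n :=
            my_exp_neg_le n hn (by positivity)
        _ = ((n : ℝ) / c) ^ n * s ^ (-(n * α)) := by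
            rw [Real.rpow_neg hs0.le, mul_comm (n : ℝ) α, Real.rpow_mul hs0.le,
              Real.rpow_natCast, div_pow, div_pow, mul_pow]
            field_simp
    have e2 : (1 + s) ^ r ≤ 2 ^ r * s ^ r := by
      rw [← Real.mul_rpow (by norm_num) hs0.le]
      apply Real.rpow_le_rpow (by linarith) (by linarith) hr.le
    calc Real.exp (-(c * s ^ α)) * (1 + s) ^ r
        ≤ (((n : ℝ) / c) ^ n * s ^ (-(n * α))) * (2 ^ r * s ^ r) :=
          mul_le_mul e1 e2 (by positivity) (by positivity)
      _ = 2 ^ r * (((n : ℝ) / c) ^ n * s ^ (r - n * α)) := by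
          rw [Real.rpow_sub hs0]
          rw [Real.rpow_neg hs0.le]
          field_simp
      _ ≤ 2 ^ r * (((n : ℝ) / c) ^ n * 1) := by
          apply mul_le_mul_of_nonneg_left _ (by positivity)
          apply mul_le_mul_of_nonneg_left _ (by positivity)
          apply Real.rpow_le_one_of_one_le_of_nonpos h1 (by linarith)
      _ ≤ 2 ^ r * max 1 (((n : ℝ) / c) ^ n) := by
          rw [mul_one]
          apply mul_le_mul_of_nonneg_left (le_max_right _ _) (by positivity)

private lemma my_integrable_exp_neg {d : ℕ} {c α : ℝ} (hc : 0 < c) (hα : 0 < α) :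
    Integrable (fun ξ : EuclideanSpace ℝ (Fin d) => Real.exp (-(c * ‖ξ‖ ^ α))) := by
  obtain ⟨n, hn⟩ := exists_nat_ge (((d : ℝ) + 1) / α)
  have hn0 : 0 < n := by
    by_contra h
    push_neg at h
    interval_cases n
    simp at hn
    nlinarith [div_pos (by positivity : (0:ℝ) < (d:ℝ)+1) hα, hn]
  have hnα : (d : ℝ) + 1 ≤ n * α := by
    rw [div_le_iff₀ hα] at hn
    linarith
  set K : ℝ := 2 ^ ((d : ℝ) + 1) * max 1 (((n : ℝ) / c) ^ n) with hK
  have hbase : Integrable (fun ξ : EuclideanSpace ℝ (Fin d) =>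
      K * (1 + ‖ξ‖) ^ (-((d : ℝ) + 1))) := by
    apply Integrable.const_mul
    apply integrable_one_add_norm
    rw [finrank_euclideanSpace_fin]
    linarith
  apply hbase.mono'
  · apply Continuous.aestronglyMeasurable
    apply Real.continuous_exp.comp
    apply Continuous.neg
    apply Continuous.mul continuous_const
    exact continuous_norm.rpow_const (fun x => Or.inr hα.le)
  · filter_upwards with ξ
    have hs : (0:ℝ) ≤ ‖ξ‖ := norm_nonneg _
    have h1s : (0:ℝ) < 1 + ‖ξ‖ := by linarith
    rw [Real.norm_eq_abs, abs_of_nonneg (Real.exp_pos _).le]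
    rw [Real.rpow_neg h1s.le, ← div_eq_mul_inv, le_div_iff₀ (by positivity)]
    exact my_key_bound hc hα _ (by positivity) hn0 hnα hs

private lemma my_fm_bounds {α : ℝ} (hα0 : 0 < α) (hα2 : α < 2) {m s : ℝ} (hm : 0 ≤ m)
    (hs : 0 ≤ s) :
    s ^ α - m ≤ (s ^ (2:ℝ) + m ^ ((2:ℝ) / α)) ^ (α / 2) - m ∧
      (s ^ (2:ℝ) + m ^ ((2:ℝ) / α)) ^ (α / 2) - m ≤ s ^ α := by
  have hs2 : (0:ℝ) ≤ s ^ (2:ℝ) := Real.rpow_nonneg hs 2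
  have hm2 : (0:ℝ) ≤ m ^ ((2:ℝ) / α) := Real.rpow_nonneg hm _
  have hsα : (s ^ (2:ℝ)) ^ (α / 2) = s ^ α := by
    rw [← Real.rpow_mul hs, show (2:ℝ) * (α / 2) = α by ring]
  have hmα : (m ^ ((2:ℝ) / α)) ^ (α / 2) = m := by
    rw [← Real.rpow_mul hm]
    rw [show (2:ℝ) / α * (α / 2) = 1 by field_simp]
    exact Real.rpow_one m
  constructor
  · have : (s ^ (2:ℝ)) ^ (α / 2) ≤ (s ^ (2:ℝ) + m ^ ((2:ℝ) / α)) ^ (α / 2) :=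
      Real.rpow_le_rpow hs2 (by linarith) (by positivity)
    rw [hsα] at this
    linarith
  · have : (s ^ (2:ℝ) + m ^ ((2:ℝ) / α)) ^ (α / 2) ≤
        (s ^ (2:ℝ)) ^ (α / 2) + (m ^ ((2:ℝ) / α)) ^ (α / 2) :=
      my_rpow_add_le hs2 hm2 (by positivity) (by linarith)
    rw [hsα, hmα] at this
    linarith

private lemma my_cont_integrand (d : ℕ) (α m t : ℝ) (hα : 0 < α)
    (x : EuclideanSpace ℝ (Fin d)) :
    Continuous (fun ξ : EuclideanSpace ℝ (Fin d) =>
      Complex.exp (-(Complex.I * ((inner ℝ ξ x : ℝ) : ℂ)) -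
        ((t * ((‖ξ‖ ^ (2 : ℝ) + m ^ ((2 : ℝ) / α)) ^ (α / 2) - m) : ℝ) : ℂ))) := by
  apply Complex.continuous_exp.comp
  apply Continuous.sub
  · apply Continuous.neg
    apply Continuous.mul continuous_const
    exact Complex.continuous_ofReal.comp (continuous_id.inner continuous_const)
  · apply Complex.continuous_ofReal.comp
    apply Continuous.mul continuous_const
    apply Continuous.sub _ continuous_const
    apply Continuous.rpow_const _ (fun _ => Or.inr (by positivity))
    exact (continuous_norm.rpow_const (fun _ => Or.inr (by norm_num))).add continuous_const

private lemma my_norm_integrand (d : ℕ) (α m t : ℝ) (x ξ : EuclideanSpace ℝ (Fin d)) :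
    ‖Complex.exp (-(Complex.I * ((inner ℝ ξ x : ℝ) : ℂ)) -
        ((t * ((‖ξ‖ ^ (2 : ℝ) + m ^ ((2 : ℝ) / α)) ^ (α / 2) - m) : ℝ) : ℂ))‖ =
      Real.exp (-(t * ((‖ξ‖ ^ (2 : ℝ) + m ^ ((2 : ℝ) / α)) ^ (α / 2) - m))) := by
  rw [Complex.norm_exp]
  congr 1
  simp

private lemma my_integrable_integrand (d : ℕ) {α m t L : ℝ} (hα0 : 0 < α) (hα2 : α < 2)
    (hm : 0 ≤ m) (hL : 0 < L) (hLt : L ≤ t) (x : EuclideanSpace ℝ (Fin d)) :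
    Integrable (fun ξ : EuclideanSpace ℝ (Fin d) =>
      Complex.exp (-(Complex.I * ((inner ℝ ξ x : ℝ) : ℂ)) -
        ((t * ((‖ξ‖ ^ (2 : ℝ) + m ^ ((2 : ℝ) / α)) ^ (α / 2) - m) : ℝ) : ℂ))) := by
  have hg : Integrable (fun ξ : EuclideanSpace ℝ (Fin d) =>
      Real.exp (t * m) * Real.exp (-(L * ‖ξ‖ ^ α))) :=
    (my_integrable_exp_neg hL hα0).const_mul _
  apply hg.mono' (my_cont_integrand d α m t hα0 x).aestronglyMeasurable
  filter_upwards with ξ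
  rw [my_norm_integrand]
  rw [← Real.exp_add]
  apply Real.exp_le_exp.2
  have hb := (my_fm_bounds hα0 hα2 hm (norm_nonneg ξ)).1
  have ht0 : 0 < t := lt_of_lt_of_le hL hLt
  have h1 : L * ‖ξ‖ ^ α ≤ t * ‖ξ‖ ^ α :=
    mul_le_mul_of_nonneg_right hLt (Real.rpow_nonneg (norm_nonneg ξ) α)
  nlinarith [mul_le_mul_of_nonneg_left hb ht0.le]

private lemma my_factor (r u : ℝ) :
    Complex.exp (-(Complex.I * (r : ℂ)) - (u : ℂ)) =
      Complex.exp (-(Complex.I * (r : ℂ))) * ((Real.exp (-u) : ℝ) : ℂ) := by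
  rw [sub_eq_add_neg, Complex.exp_add]
  congr 1
  rw [← Complex.ofReal_neg, Complex.ofReal_exp]

private lemma my_norm_unit (r : ℝ) : ‖Complex.exp (-(Complex.I * (r : ℂ)))‖ = 1 := by
  rw [Complex.norm_exp]
  simp

private lemma my_diff_bound (d : ℕ) {α m t L M : ℝ} (hα0 : 0 < α) (hα2 : α < 2)
    (hm : 0 ≤ m) (hL : 0 < L) (hLt : L ≤ t) (htM : t ≤ M)
    (x ξ : EuclideanSpace ℝ (Fin d)) :
    ‖Complex.exp (-(Complex.I * ((inner ℝ ξ x : ℝ) : ℂ)) -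
        ((t * ((‖ξ‖ ^ (2 : ℝ) + m ^ ((2 : ℝ) / α)) ^ (α / 2) - m) : ℝ) : ℂ)) -
      Complex.exp (-(Complex.I * ((inner ℝ ξ x : ℝ) : ℂ)) -
        ((t * ((‖ξ‖ ^ (2 : ℝ) + (0:ℝ) ^ ((2 : ℝ) / α)) ^ (α / 2) - 0) : ℝ) : ℂ))‖ ≤
      (Real.exp (M * m) - 1) * Real.exp (-(L * ‖ξ‖ ^ α)) := by
  have ht0 : 0 < t := lt_of_lt_of_le hL hLt
  set r : ℝ := (inner ℝ ξ x : ℝ)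
  set a : ℝ := t * ((‖ξ‖ ^ (2 : ℝ) + m ^ ((2 : ℝ) / α)) ^ (α / 2) - m) with ha
  set b : ℝ := t * ((‖ξ‖ ^ (2 : ℝ) + (0:ℝ) ^ ((2 : ℝ) / α)) ^ (α / 2) - 0) with hb
  have hf0 : (‖ξ‖ ^ (2 : ℝ) + (0:ℝ) ^ ((2 : ℝ) / α)) ^ (α / 2) - 0 = ‖ξ‖ ^ α := by
    have h := my_fm_bounds hα0 hα2 (le_refl (0:ℝ)) (norm_nonneg ξ)
    have h1 := h.1
    have h2 := h.2
    linarith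
  have hbval : b = t * ‖ξ‖ ^ α := by rw [hb, hf0]
  have hfm := my_fm_bounds hα0 hα2 hm (norm_nonneg ξ)
  have hab : a ≤ b := by
    rw [ha, hbval]
    exact mul_le_mul_of_nonneg_left hfm.2 ht0.le
  have hab2 : b - t * m ≤ a := by
    rw [ha, hbval]
    nlinarith [mul_le_mul_of_nonneg_left hfm.1 ht0.le]
  rw [my_factor, my_factor, ← mul_sub, norm_mul, my_norm_unit, one_mul,
    ← Complex.ofReal_sub, Complex.norm_real, Real.norm_eq_abs]
  have hexp : Real.exp (-b) ≤ Real.exp (-a) := Real.exp_le_exp.2 (neg_le_neg hab)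
  rw [abs_of_nonneg (by linarith)]
  have h3 : Real.exp (-a) ≤ Real.exp (-b) * Real.exp (t * m) := by
    rw [← Real.exp_add]
    apply Real.exp_le_exp.2
    linarith
  have h4 : Real.exp (-b) ≤ Real.exp (-(L * ‖ξ‖ ^ α)) := by
    apply Real.exp_le_exp.2
    rw [hbval]
    have : L * ‖ξ‖ ^ α ≤ t * ‖ξ‖ ^ α :=
      mul_le_mul_of_nonneg_right hLt (Real.rpow_nonneg (norm_nonneg ξ) α)
    linarith
  have h5 : Real.exp (t * m) ≤ Real.exp (M * m) :=
    Real.exp_le_exp.2 (mul_le_mul_of_nonneg_right htM hm)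
  have h6 : (1:ℝ) ≤ Real.exp (t * m) := by
    rw [show (1:ℝ) = Real.exp 0 by simp]
    exact Real.exp_le_exp.2 (by positivity)
  nlinarith [Real.exp_pos (-b), Real.exp_pos (-(L * ‖ξ‖ ^ α))]

/-- `p^m(t,x)` converges uniformly to `p^0(t,x)` on `[L,M] × ℝ^d` as `m → 0⁺`. -/
theorem relDensity_unif_conv (d : ℕ) (hd : 2 ≤ d) (α : ℝ) (hα₀ : 0 < α) (hα₂ : α < 2)
    (L M : ℝ) (hL : 0 < L) (hLM : L < M) :
    ∀ ε > 0, ∃ m₀ > 0, ∀ m : ℝ, 0 < m → m ≤ m₀ →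
      ∀ t ∈ Set.Icc L M, ∀ x : EuclideanSpace ℝ (Fin d),
        |relDensity d α m t x - relDensity d α 0 t x| < ε := by
  intro ε hε
  have hM0 : 0 < M := hL.trans hLM
  set C : ℝ := ∫ ξ : EuclideanSpace ℝ (Fin d), Real.exp (-(L * ‖ξ‖ ^ α)) with hC
  have hC0 : 0 ≤ C := integral_nonneg fun ξ => (Real.exp_pos _).le
  have harg : (1:ℝ) < 1 + ε / (C + 1) := by
    have : 0 < ε / (C + 1) := by positivity
    linarith
  refine ⟨Real.log (1 + ε / (C + 1)) / M, div_pos (Real.log_pos harg) hM0, ?_⟩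
  intro m hm hm₀ t ht x
  obtain ⟨htL, htM⟩ := ht
  set c : ℝ := (2 * Real.pi) ^ (-(d : ℝ)) with hc
  have hc0 : 0 < c := Real.rpow_pos_of_pos (by positivity) _
  have hc1 : c ≤ 1 :=
    Real.rpow_le_one_of_one_le_of_nonpos (by nlinarith [Real.pi_gt_three])
      (by simp [Nat.cast_nonneg])
  have hIm := my_integrable_integrand d hα₀ hα₂ hm.le hL htL x
  have hI0 := my_integrable_integrand d (m := 0) hα₀ hα₂ le_rfl hL htL x
  have key : |relDensity d α m t x - relDensity d α 0 t x| ≤ (Real.exp (M * m) - 1) * C := by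
    have h1 : relDensity d α m t x - relDensity d α 0 t x =
        c * ((∫ ξ : EuclideanSpace ℝ (Fin d),
            Complex.exp (-(Complex.I * ((inner ℝ ξ x : ℝ) : ℂ)) -
              ((t * ((‖ξ‖ ^ (2 : ℝ) + m ^ ((2 : ℝ) / α)) ^ (α / 2) - m) : ℝ) : ℂ))) -
          (∫ ξ : EuclideanSpace ℝ (Fin d),
            Complex.exp (-(Complex.I * ((inner ℝ ξ x : ℝ) : ℂ)) -
              ((t * ((‖ξ‖ ^ (2 : ℝ) + (0:ℝ) ^ ((2 : ℝ) / α)) ^ (α / 2) - 0) : ℝ) : ℂ)))).re := by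
      rw [Complex.sub_re]
      unfold relDensity
      ring
    rw [h1, ← integral_sub hIm hI0, abs_mul, abs_of_nonneg hc0.le]
    calc c * |(∫ ξ : EuclideanSpace ℝ (Fin d),
            (Complex.exp (-(Complex.I * ((inner ℝ ξ x : ℝ) : ℂ)) -
              ((t * ((‖ξ‖ ^ (2 : ℝ) + m ^ ((2 : ℝ) / α)) ^ (α / 2) - m) : ℝ) : ℂ)) -
            Complex.exp (-(Complex.I * ((inner ℝ ξ x : ℝ) : ℂ)) -
              ((t * ((‖ξ‖ ^ (2 : ℝ) + (0:ℝ) ^ ((2 : ℝ) / α)) ^ (α / 2) - 0) : ℝ) : ℂ)))).re|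
        ≤ c * ‖∫ ξ : EuclideanSpace ℝ (Fin d),
            (Complex.exp (-(Complex.I * ((inner ℝ ξ x : ℝ) : ℂ)) -
              ((t * ((‖ξ‖ ^ (2 : ℝ) + m ^ ((2 : ℝ) / α)) ^ (α / 2) - m) : ℝ) : ℂ)) -
            Complex.exp (-(Complex.I * ((inner ℝ ξ x : ℝ) : ℂ)) -
              ((t * ((‖ξ‖ ^ (2 : ℝ) + (0:ℝ) ^ ((2 : ℝ) / α)) ^ (α / 2) - 0) : ℝ) : ℂ)))‖ := by
          apply mul_le_mul_of_nonneg_left _ hc0.le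
          exact Complex.abs_re_le_norm _
      _ ≤ c * ∫ ξ : EuclideanSpace ℝ (Fin d),
            ‖Complex.exp (-(Complex.I * ((inner ℝ ξ x : ℝ) : ℂ)) -
              ((t * ((‖ξ‖ ^ (2 : ℝ) + m ^ ((2 : ℝ) / α)) ^ (α / 2) - m) : ℝ) : ℂ)) -
            Complex.exp (-(Complex.I * ((inner ℝ ξ x : ℝ) : ℂ)) -
              ((t * ((‖ξ‖ ^ (2 : ℝ) + (0:ℝ) ^ ((2 : ℝ) / α)) ^ (α / 2) - 0) : ℝ) : ℂ))‖ :=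
          mul_le_mul_of_nonneg_left (norm_integral_le_integral_norm _) hc0.le
      _ ≤ 1 * ∫ ξ : EuclideanSpace ℝ (Fin d),
            (Real.exp (M * m) - 1) * Real.exp (-(L * ‖ξ‖ ^ α)) := by
          apply mul_le_mul hc1 _ (integral_nonneg fun ξ => norm_nonneg _) zero_le_one
          apply integral_mono_of_nonneg
          · filter_upwards with ξ using norm_nonneg _
          · exact (my_integrable_exp_neg hL hα₀).const_mul _
          · filter_upwards with ξ using my_diff_bound d hα₀ hα₂ hm.le hL htL htM x ξ
      _ = (Real.exp (M * m) - 1) * C := by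
          rw [one_mul, MeasureTheory.integral_const_mul]
  have h2 : M * m ≤ Real.log (1 + ε / (C + 1)) := by
    have := (le_div_iff₀ hM0).1 hm₀
    linarith
  have h3 : Real.exp (M * m) ≤ 1 + ε / (C + 1) := by
    rw [← Real.exp_log (show (0:ℝ) < 1 + ε / (C + 1) by linarith)]
    exact Real.exp_le_exp.2 h2
  have h4 : (Real.exp (M * m) - 1) * C ≤ ε / (C + 1) * C :=
    mul_le_mul_of_nonneg_right (by linarith) hC0
  have h5 : ε / (C + 1) * C < ε := by
    rw [div_mul_eq_mul_div, div_lt_iff₀ (by linarith)]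
    nlinarith
  linarith [key]
end

section
/- Fix 0 < L < M < ∞. Then for all m > 0, t ∈ [L,M] and x ∈ ℝ^d, | p^0(t,x) - p^m(t,x) | ≤ (2π)^{-d} L^{-d/α} [ e^{mM} (α/2) (mM)^{2/α} ∫_{ℝ^d} e^{-|ξ|^α} |ξ|^{α-2} dξ + (e^{mM} - 1) ∫_{ℝ^d} e^{-|ξ|^α} dξ ], and in particular the right-hand side tends to 0 as m → 0⁺. -/
open MeasureTheory Real Set Filter

section AuxLemmas

lemma aux_real_rpow_add_le_add_rpow {p x y : ℝ} (hx : 0 ≤ x) (hy : 0 ≤ y) (hp0 : 0 ≤ p)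
    (hp1 : p ≤ 1) : (x + y) ^ p ≤ x ^ p + y ^ p := by
  have h := NNReal.rpow_add_le_add_rpow x.toNNReal y.toNNReal hp0 hp1
  have h2 := NNReal.coe_le_coe.2 h
  push_cast at h2
  rwa [Real.coe_toNNReal x hx, Real.coe_toNNReal y hy] at h2

lemma aux_rpow_two_rpow_half {α : ℝ} (r : ℝ) (hr : 0 ≤ r) :
    (r ^ (2:ℝ)) ^ (α/2) = r ^ α := by
  rw [← Real.rpow_mul hr]; ring_nf

lemma aux_m_rpow_rpow {α m : ℝ} (hα0 : 0 < α) (hm : 0 ≤ m) :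
    (m ^ ((2:ℝ)/α)) ^ (α/2) = m := by
  rw [← Real.rpow_mul hm, show (2:ℝ)/α * (α/2) = α/α * 1 by ring, div_self hα0.ne', one_mul,
    Real.rpow_one]

lemma aux_integrable_exp_neg_mul_norm_rpow (d : ℕ) {t α : ℝ} (ht : 0 < t) (hα : 0 < α) :
    Integrable (fun ξ : EuclideanSpace ℝ (Fin d) => Real.exp (-(t * ‖ξ‖ ^ α))) := by
  obtain ⟨n, hn⟩ : ∃ n : ℕ, (d + 1 : ℝ) ≤ α * n := by
    refine ⟨⌈(d + 1 : ℝ) / α⌉₊, ?_⟩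
    rw [← div_le_iff₀' hα]
    exact Nat.le_ceil _
  set C : ℝ := 2 ^ (d + 1) * (1 + n.factorial * (t⁻¹) ^ n) with hC
  have hfac1 : (1:ℝ) ≤ n.factorial := by exact_mod_cast Nat.one_le_iff_ne_zero.2 n.factorial_ne_zero
  have htn : (0:ℝ) ≤ t⁻¹ ^ n := by positivity
  have h2pos : (0:ℝ) < 2 ^ (d + 1) := by positivity
  have hint := (integrable_one_add_norm
    (μ := (volume : Measure (EuclideanSpace ℝ (Fin d))))
    (r := (d : ℝ) + 1) (by rw [finrank_euclideanSpace_fin]; linarith)).const_mul C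
  refine hint.mono' ?_ (ae_of_all _ fun ξ => ?_)
  · apply Continuous.aestronglyMeasurable
    exact Real.continuous_exp.comp
      ((continuous_const.mul ((continuous_norm).rpow_const fun _ => Or.inr hα.le)).neg)
  · have hnorm : 0 ≤ ‖ξ‖ := norm_nonneg _
    set r := ‖ξ‖
    have h1r : (0:ℝ) < 1 + r := by linarith
    have hrw : (1 + r) ^ (-((d : ℝ) + 1)) = ((1 + r) ^ (d + 1 : ℕ))⁻¹ := by
      rw [← Real.rpow_natCast (1 + r) (d+1), ← Real.rpow_neg h1r.le]
      norm_num
    rw [Real.norm_eq_abs, abs_of_pos (Real.exp_pos _), hrw, ← div_eq_mul_inv,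
      le_div_iff₀ (by positivity)]
    rcases le_total r 1 with hr | hr
    · have h1 : Real.exp (-(t * r ^ α)) ≤ 1 := by
        rw [Real.exp_le_one_iff]
        have : 0 ≤ r ^ α := Real.rpow_nonneg hnorm α
        nlinarith [ht.le]
      have h2 : (1 + r) ^ (d + 1 : ℕ) ≤ 2 ^ (d + 1 : ℕ) := by
        apply pow_le_pow_left₀ (by linarith) (by linarith)
      calc Real.exp (-(t * r ^ α)) * (1 + r) ^ (d + 1 : ℕ)
          ≤ 1 * 2 ^ (d + 1 : ℕ) := mul_le_mul h1 h2 (by positivity) (by norm_num)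
        _ ≤ C := by rw [hC, one_mul]; nlinarith [mul_nonneg (le_trans zero_le_one hfac1) htn]
    · have hrpos : (0:ℝ) < r := by linarith
      have ht' : t ≠ 0 := ht.ne'
      have hXpos : (0:ℝ) < (r ^ α) ^ n := by positivity
      have hX' : ((r ^ α) ^ n) ≠ 0 := hXpos.ne'
      have hX1 : (r:ℝ) ^ (d + 1 : ℕ) ≤ (r ^ α) ^ n := by
        rw [← Real.rpow_natCast (r ^ α) n, ← Real.rpow_mul hnorm, ← Real.rpow_natCast r (d+1)]
        apply Real.rpow_le_rpow_of_exponent_le hr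
        push_cast; linarith
      have hexp : Real.exp (-(t * r ^ α)) ≤ n.factorial / (t * r ^ α) ^ n := by
        rw [Real.exp_neg, le_div_iff₀ (by positivity), inv_mul_le_iff₀ (Real.exp_pos _)]
        have h := Real.pow_div_factorial_le_exp (t * r ^ α) (by positivity) n
        rw [div_le_iff₀ (by positivity)] at h
        linarith
      calc Real.exp (-(t * r ^ α)) * (1 + r) ^ (d + 1 : ℕ)
          ≤ (n.factorial / (t * r ^ α) ^ n) * (2 ^ (d+1) * (r ^ α) ^ n) := by
            refine mul_le_mul hexp ?_ (by positivity) (by positivity)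
            calc (1 + r) ^ (d + 1 : ℕ) ≤ (2 * r) ^ (d + 1 : ℕ) :=
                  pow_le_pow_left₀ (by linarith) (by linarith) _
              _ = 2 ^ (d+1) * r ^ (d+1 : ℕ) := mul_pow 2 r (d+1)
              _ ≤ 2 ^ (d+1) * (r ^ α) ^ n := mul_le_mul_of_nonneg_left hX1 (by positivity)
        _ = 2 ^ (d+1) * (n.factorial * t⁻¹ ^ n) := by
            rw [mul_pow]; field_simp; ring; rw [← mul_pow, mul_inv_cancel₀ ht', one_pow]
        _ ≤ C := by
            rw [hC]
            nlinarith [mul_nonneg (le_trans zero_le_one hfac1) htn]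

variable {d : ℕ} {α m t : ℝ}

lemma aux_H_lower (hα0 : 0 < α) (hm : 0 ≤ m) (r : ℝ) (hr : 0 ≤ r) :
    r ^ α ≤ (r ^ (2:ℝ) + m ^ ((2:ℝ)/α)) ^ (α/2) := by
  rw [← aux_rpow_two_rpow_half r hr]
  exact Real.rpow_le_rpow (by positivity) (le_add_of_nonneg_right (by positivity)) (by positivity)

lemma aux_H_upper (hα0 : 0 < α) (hα2 : α < 2) (hm : 0 ≤ m) (r : ℝ) (hr : 0 ≤ r) :
    (r ^ (2:ℝ) + m ^ ((2:ℝ)/α)) ^ (α/2) ≤ r ^ α + m := by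
  calc (r ^ (2:ℝ) + m ^ ((2:ℝ)/α)) ^ (α/2)
      ≤ (r ^ (2:ℝ)) ^ (α/2) + (m ^ ((2:ℝ)/α)) ^ (α/2) :=
        aux_real_rpow_add_le_add_rpow (by positivity) (by positivity) (by positivity) (by linarith)
    _ = r ^ α + m := by rw [aux_rpow_two_rpow_half r hr, aux_m_rpow_rpow hα0 hm]

lemma aux_norm_integrand_sub_le (hα0 : 0 < α) (hα2 : α < 2) (hm : 0 < m) (ht : 0 < t)
    (x ξ : EuclideanSpace ℝ (Fin d)) :
    ‖Complex.exp (-(Complex.I * ((inner ℝ ξ x : ℝ) : ℂ)) -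
        ((t * ((‖ξ‖ ^ (2 : ℝ) + (0:ℝ) ^ ((2 : ℝ) / α)) ^ (α / 2) - 0) : ℝ) : ℂ)) -
      Complex.exp (-(Complex.I * ((inner ℝ ξ x : ℝ) : ℂ)) -
        ((t * ((‖ξ‖ ^ (2 : ℝ) + m ^ ((2 : ℝ) / α)) ^ (α / 2) - m) : ℝ) : ℂ))‖
      ≤ (Real.exp (t * m) - 1) * Real.exp (-(t * ‖ξ‖ ^ α)) := by
  have hr : (0:ℝ) ≤ ‖ξ‖ := norm_nonneg _
  set c : ℝ := (inner ℝ ξ x : ℝ)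
  set A : ℝ := t * ((‖ξ‖ ^ (2:ℝ) + (0:ℝ) ^ ((2:ℝ)/α)) ^ (α/2) - 0) with hA
  set B : ℝ := t * ((‖ξ‖ ^ (2:ℝ) + m ^ ((2:ℝ)/α)) ^ (α/2) - m) with hB
  have factor : ∀ r : ℝ, Complex.exp (-(Complex.I * (c:ℂ)) - (r:ℂ)) =
      Complex.exp (-(Complex.I * (c:ℂ))) * ((Real.exp (-r) : ℝ) : ℂ) := by
    intro r
    rw [sub_eq_add_neg, Complex.exp_add, ← Complex.ofReal_neg, Complex.ofReal_exp]
  rw [factor A, factor B, ← mul_sub, norm_mul, ← Complex.ofReal_sub, Complex.norm_real]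
  have hn1 : ‖Complex.exp (-(Complex.I * (c:ℂ)))‖ = 1 := by
    rw [Complex.norm_exp]
    simp
  rw [hn1, one_mul, Real.norm_eq_abs]
  set H : ℝ := (‖ξ‖ ^ (2:ℝ) + m ^ ((2:ℝ)/α)) ^ (α/2) with hH
  have hA' : A = t * ‖ξ‖ ^ α := by
    rw [hA, Real.zero_rpow (by positivity), add_zero, sub_zero, aux_rpow_two_rpow_half _ hr]
  have h1 : ‖ξ‖ ^ α ≤ H := aux_H_lower hα0 hm.le _ hr
  have h2 : H ≤ ‖ξ‖ ^ α + m := aux_H_upper hα0 hα2 hm.le _ hr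
  have hBA : B ≤ A := by rw [hA', hB]; nlinarith
  have hEA : Real.exp (-A) ≤ Real.exp (-B) := Real.exp_le_exp.2 (by linarith)
  rw [abs_sub_comm, abs_of_nonneg (by linarith)]
  have hBsplit : Real.exp (-B) = Real.exp (t * m) * Real.exp (-(t * H)) := by
    rw [← Real.exp_add, hB]; ring_nf
  have hHle : Real.exp (-(t * H)) ≤ Real.exp (-A) := by
    rw [hA']
    exact Real.exp_le_exp.2 (by nlinarith)
  have hexp1 : (1:ℝ) ≤ Real.exp (t * m) := Real.one_le_exp (by positivity)
  have hEApos : 0 < Real.exp (-A) := Real.exp_pos _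
  rw [hA'] at *
  nlinarith [Real.exp_pos (-(t * H))]

lemma aux_integrable_integrand (hα0 : 0 < α) (hm : 0 ≤ m) (ht : 0 < t)
    (x : EuclideanSpace ℝ (Fin d)) :
    Integrable (fun ξ : EuclideanSpace ℝ (Fin d) =>
      Complex.exp (-(Complex.I * ((inner ℝ ξ x : ℝ) : ℂ)) -
        ((t * ((‖ξ‖ ^ (2 : ℝ) + m ^ ((2 : ℝ) / α)) ^ (α / 2) - m) : ℝ) : ℂ))) := by
  have hint : Integrable (fun ξ : EuclideanSpace ℝ (Fin d) =>
      Real.exp (t * m) * Real.exp (-(t * ‖ξ‖ ^ α))) :=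
    (aux_integrable_exp_neg_mul_norm_rpow d ht hα0).const_mul _
  refine hint.mono' ?_ (ae_of_all _ fun ξ => ?_)
  · apply Continuous.aestronglyMeasurable
    have g1 : Continuous fun ξ : EuclideanSpace ℝ (Fin d) => (inner ℝ ξ x : ℝ) :=
      Continuous.inner continuous_id continuous_const
    have c2 : Continuous fun ξ : EuclideanSpace ℝ (Fin d) =>
        (‖ξ‖ ^ (2:ℝ) + m ^ ((2:ℝ)/α)) ^ (α/2) :=
      ((continuous_norm.rpow_const fun _ => Or.inr (by norm_num)).add
        continuous_const).rpow_const (fun ξ => Or.inr (by positivity))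
    exact Complex.continuous_exp.comp
      (((continuous_const.mul (Complex.continuous_ofReal.comp g1)).neg).sub
        (Complex.continuous_ofReal.comp (continuous_const.mul (c2.sub continuous_const))))
  · have hre : (-(Complex.I * ((inner ℝ ξ x : ℝ):ℂ)) -
        ((t * ((‖ξ‖ ^ (2:ℝ) + m ^ ((2:ℝ)/α)) ^ (α/2) - m) : ℝ) : ℂ)).re
        = -(t * ((‖ξ‖ ^ (2:ℝ) + m ^ ((2:ℝ)/α)) ^ (α/2) - m)) := by simp
    rw [Complex.norm_exp, hre, ← Real.exp_add]
    apply Real.exp_le_exp.2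
    have h1 := aux_H_lower (m := m) hα0 hm ‖ξ‖ (norm_nonneg _)
    nlinarith

lemma aux_change_of_var (d : ℕ) (hα0 : 0 < α) (ht : 0 < t) :
    ∫ ξ : EuclideanSpace ℝ (Fin d), Real.exp (-(t * ‖ξ‖ ^ α))
      = t ^ (-((d:ℝ)/α)) * ∫ ξ : EuclideanSpace ℝ (Fin d), Real.exp (-‖ξ‖ ^ α) := by
  have hR : (0:ℝ) ≤ t ^ (α⁻¹) := by positivity
  have h := MeasureTheory.Measure.integral_comp_smul_of_nonneg
    (μ := (volume : Measure (EuclideanSpace ℝ (Fin d))))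
    (fun ξ : EuclideanSpace ℝ (Fin d) => Real.exp (-‖ξ‖ ^ α)) (t ^ (α⁻¹)) (hR := hR)
  have hLHS : (∫ ξ : EuclideanSpace ℝ (Fin d),
      Real.exp (-‖(t ^ (α⁻¹)) • ξ‖ ^ α)) = ∫ ξ : EuclideanSpace ℝ (Fin d),
      Real.exp (-(t * ‖ξ‖ ^ α)) := by
    congr 1
    ext ξ
    congr 1
    rw [norm_smul, Real.norm_eq_abs, abs_of_nonneg hR,
      Real.mul_rpow hR (norm_nonneg _), ← Real.rpow_mul ht.le, inv_mul_cancel₀ hα0.ne',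
      Real.rpow_one]
  rw [hLHS] at h
  rw [h, finrank_euclideanSpace_fin, smul_eq_mul]
  congr 1
  rw [← Real.rpow_natCast (t ^ α⁻¹) d, ← Real.rpow_mul ht.le, ← Real.rpow_neg ht.le]
  congr 1
  field_simp

end AuxLemmas

/-- For all `m > 0`, `t ∈ [L,M]` and `x`,
`|p^0(t,x) - p^m(t,x)| ≤ (2π)^{-d} L^{-d/α} [e^{mM}(α/2)(mM)^{2/α} ∫ e^{-|ξ|^α}|ξ|^{α-2} dξ
  + (e^{mM}-1) ∫ e^{-|ξ|^α} dξ]`, and the right-hand side tends to `0` as `m → 0⁺`. -/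
theorem relDensity_diff_bound_and_tendsto (d : ℕ) (hd : 2 ≤ d) (α : ℝ) (hα₀ : 0 < α)
    (hα₂ : α < 2) (L M : ℝ) (hL : 0 < L) (hLM : L < M) :
    (∀ m : ℝ, 0 < m → ∀ t ∈ Set.Icc L M, ∀ x : EuclideanSpace ℝ (Fin d),
      |relDensity d α 0 t x - relDensity d α m t x|
        ≤ (2 * Real.pi) ^ (-(d : ℝ)) * L ^ (-((d : ℝ) / α)) *
            (Real.exp (m * M) * (α / 2) * (m * M) ^ ((2 : ℝ) / α) *
                (∫ ξ : EuclideanSpace ℝ (Fin d), Real.exp (-‖ξ‖ ^ α) * ‖ξ‖ ^ (α - 2))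
              + (Real.exp (m * M) - 1) *
                (∫ ξ : EuclideanSpace ℝ (Fin d), Real.exp (-‖ξ‖ ^ α))))
      ∧ Tendsto (fun m : ℝ =>
            (2 * Real.pi) ^ (-(d : ℝ)) * L ^ (-((d : ℝ) / α)) *
              (Real.exp (m * M) * (α / 2) * (m * M) ^ ((2 : ℝ) / α) *
                  (∫ ξ : EuclideanSpace ℝ (Fin d), Real.exp (-‖ξ‖ ^ α) * ‖ξ‖ ^ (α - 2))
                + (Real.exp (m * M) - 1) *
                  (∫ ξ : EuclideanSpace ℝ (Fin d), Real.exp (-‖ξ‖ ^ α))))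
          (nhdsWithin 0 (Set.Ioi 0)) (nhds 0) := by
  set E := EuclideanSpace ℝ (Fin d)
  set I₁ : ℝ := ∫ ξ : E, Real.exp (-‖ξ‖ ^ α) * ‖ξ‖ ^ (α - 2) with hI₁
  set I₂ : ℝ := ∫ ξ : E, Real.exp (-‖ξ‖ ^ α) with hI₂
  have hI₁0 : 0 ≤ I₁ := integral_nonneg fun ξ => by positivity
  have hI₂0 : 0 ≤ I₂ := integral_nonneg fun ξ => by positivity
  have hc0 : (0:ℝ) ≤ (2 * Real.pi) ^ (-(d : ℝ)) :=
    Real.rpow_nonneg (by positivity) _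
  constructor
  · rintro m hm t ⟨htL, htM⟩ x
    have ht : 0 < t := lt_of_lt_of_le hL htL
    set F0 : E → ℂ := fun ξ => Complex.exp (-(Complex.I * ((inner ℝ ξ x : ℝ) : ℂ)) -
        ((t * ((‖ξ‖ ^ (2 : ℝ) + (0:ℝ) ^ ((2 : ℝ) / α)) ^ (α / 2) - 0) : ℝ) : ℂ)) with hF0
    set Fm : E → ℂ := fun ξ => Complex.exp (-(Complex.I * ((inner ℝ ξ x : ℝ) : ℂ)) -
        ((t * ((‖ξ‖ ^ (2 : ℝ) + m ^ ((2 : ℝ) / α)) ^ (α / 2) - m) : ℝ) : ℂ)) with hFm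
    have hint0 : Integrable F0 := aux_integrable_integrand hα₀ le_rfl ht x
    have hintm : Integrable Fm := aux_integrable_integrand hα₀ hm.le ht x
    have hb : Integrable (fun ξ : E =>
        (Real.exp (t * m) - 1) * Real.exp (-(t * ‖ξ‖ ^ α))) :=
      (aux_integrable_exp_neg_mul_norm_rpow d ht hα₀).const_mul _
    have key : |relDensity d α 0 t x - relDensity d α m t x|
        ≤ (2 * Real.pi) ^ (-(d : ℝ)) *
          ((Real.exp (t * m) - 1) * (t ^ (-((d:ℝ)/α)) * I₂)) := by
      unfold relDensity
      rw [← mul_sub, abs_mul, abs_of_nonneg hc0]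
      apply mul_le_mul_of_nonneg_left _ hc0
      rw [← Complex.sub_re, ← integral_sub hint0 hintm]
      calc |(∫ ξ : E, (F0 ξ - Fm ξ)).re| ≤ ‖∫ ξ : E, (F0 ξ - Fm ξ)‖ := by
            exact Complex.abs_re_le_norm _
        _ ≤ ∫ ξ : E, (Real.exp (t * m) - 1) * Real.exp (-(t * ‖ξ‖ ^ α)) :=
            norm_integral_le_of_norm_le hb (ae_of_all _ fun ξ =>
              aux_norm_integrand_sub_le hα₀ hα₂ hm ht x ξ)
        _ = (Real.exp (t * m) - 1) * (t ^ (-((d:ℝ)/α)) * I₂) := by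
            rw [integral_const_mul, aux_change_of_var d hα₀ ht]
    refine key.trans ?_
    rw [mul_assoc ((2 * Real.pi) ^ (-(d : ℝ))) (L ^ (-((d : ℝ) / α)))]
    apply mul_le_mul_of_nonneg_left _ hc0
    have hM : (0:ℝ) < M := hL.trans hLM
    have hT1 : 0 ≤ Real.exp (m * M) * (α / 2) * (m * M) ^ ((2 : ℝ) / α) * I₁ :=
      mul_nonneg (mul_nonneg (mul_nonneg (Real.exp_nonneg _) (by positivity))
        (Real.rpow_nonneg (by nlinarith) _)) hI₁0
    have h1 : Real.exp (t * m) - 1 ≤ Real.exp (m * M) - 1 := by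
      have : t * m ≤ m * M := by nlinarith
      have := Real.exp_le_exp.2 this
      linarith
    have h10 : 0 ≤ Real.exp (t * m) - 1 := by
      have := Real.one_le_exp (by positivity : (0:ℝ) ≤ t * m)
      linarith
    have h2 : t ^ (-((d:ℝ)/α)) ≤ L ^ (-((d:ℝ)/α)) :=
      Real.rpow_le_rpow_of_nonpos hL htL (neg_nonpos.2 (by positivity))
    have hL0 : 0 ≤ L ^ (-((d:ℝ)/α)) := Real.rpow_nonneg hL.le _
    have step : (Real.exp (t * m) - 1) * (t ^ (-((d:ℝ)/α)) * I₂)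
        ≤ (Real.exp (m * M) - 1) * (L ^ (-((d:ℝ)/α)) * I₂) := by
      have hq : (Real.exp (t * m) - 1) * t ^ (-((d:ℝ)/α))
          ≤ (Real.exp (m * M) - 1) * L ^ (-((d:ℝ)/α)) :=
        mul_le_mul h1 h2 (Real.rpow_nonneg ht.le _) (by linarith)
      calc (Real.exp (t * m) - 1) * (t ^ (-((d:ℝ)/α)) * I₂)
          = ((Real.exp (t * m) - 1) * t ^ (-((d:ℝ)/α))) * I₂ := by ring
        _ ≤ ((Real.exp (m * M) - 1) * L ^ (-((d:ℝ)/α))) * I₂ :=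
            mul_le_mul_of_nonneg_right hq hI₂0
        _ = (Real.exp (m * M) - 1) * (L ^ (-((d:ℝ)/α)) * I₂) := by ring
    calc (Real.exp (t * m) - 1) * (t ^ (-((d:ℝ)/α)) * I₂)
        ≤ (Real.exp (m * M) - 1) * (L ^ (-((d:ℝ)/α)) * I₂) := step
      _ ≤ L ^ (-((d:ℝ)/α)) * (Real.exp (m * M) * (α / 2) * (m * M) ^ ((2 : ℝ) / α) * I₁
            + (Real.exp (m * M) - 1) * I₂) := by nlinarith [mul_nonneg hL0 hT1]
  · -- tendsto part
    apply Tendsto.mono_left _ nhdsWithin_le_nhds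
    have hcont : ContinuousAt (fun m : ℝ =>
        (2 * Real.pi) ^ (-(d : ℝ)) * L ^ (-((d : ℝ) / α)) *
          (Real.exp (m * M) * (α / 2) * (m * M) ^ ((2 : ℝ) / α) * I₁
            + (Real.exp (m * M) - 1) * I₂)) 0 := by
      have hmM : ContinuousAt (fun m : ℝ => m * M) 0 := by fun_prop
      have hrpow : ContinuousAt (fun m : ℝ => (m * M) ^ ((2 : ℝ) / α)) 0 := by
        have h0 : ContinuousAt (fun y : ℝ => y ^ ((2 : ℝ) / α)) ((fun m : ℝ => m * M) 0) := by
          simp only [zero_mul]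
          exact Real.continuousAt_rpow_const 0 _ (Or.inr (by positivity))
        exact ContinuousAt.comp (g := fun y : ℝ => y ^ ((2 : ℝ) / α))
          (f := fun m : ℝ => m * M) h0 hmM
      have hexp : ContinuousAt (fun m : ℝ => Real.exp (m * M)) 0 :=
        (Real.continuous_exp.continuousAt).comp hmM
      exact continuousAt_const.mul
        ((((hexp.mul continuousAt_const).mul hrpow).mul continuousAt_const).add
          ((hexp.sub continuousAt_const).mul continuousAt_const))
    have := hcont.tendsto
    have h0 : ((2 * Real.pi) ^ (-(d : ℝ)) * L ^ (-((d : ℝ) / α)) *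
          (Real.exp ((0:ℝ) * M) * (α / 2) * ((0:ℝ) * M) ^ ((2 : ℝ) / α) * I₁
            + (Real.exp ((0:ℝ) * M) - 1) * I₂)) = 0 := by
      rw [zero_mul, Real.zero_rpow (by positivity), Real.exp_zero]
      ring
    rwa [h0] at this
end

section
/- For every fixed m > 0, lim_{t→0⁺} t^{d/α} p^m(t,0) = ω_d Γ(d/α)/((2π)^d α), where ω_d = 2π^{d/2}/Γ(d/2). Consequently, for any measurable set D ⊂ ℝ^d of finite Lebesgue measure, lim_{t→0⁺} t^{d/α} ∫_D p^m(t,0) dx = |D| · ω_d Γ(d/α)/((2π)^d α). -/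
open MeasureTheory Real Set Filter

lemma relAux_key {α : ℝ} (hα : 0 < α) (d : ℕ) {r : ℝ} (hr : 0 ≤ r) :
    (1 + r) ^ ((d : ℝ) + 1) ≤
      (2 ^ (d + 1) * Nat.factorial ⌈((d : ℝ) + 1) / α⌉₊) * Real.exp (r ^ α) := by
  set n : ℕ := ⌈((d : ℝ) + 1) / α⌉₊ with hn
  have hfact : ((r ^ α) ^ n / Nat.factorial n : ℝ) ≤ Real.exp (r ^ α) :=
    Real.pow_div_factorial_le_exp _ (by positivity) n
  have hfac1 : (1:ℝ) ≤ Nat.factorial n := by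
    exact_mod_cast Nat.one_le_iff_ne_zero.mpr (Nat.factorial_ne_zero n)
  have hexp1 : (1:ℝ) ≤ Real.exp (r ^ α) := Real.one_le_exp (by positivity)
  have h7 : (2:ℝ) ^ ((d:ℝ) + 1) = 2 ^ (d + 1) := by
    rw [show ((d:ℝ) + 1) = ((d + 1 : ℕ) : ℝ) by push_cast; ring, Real.rpow_natCast]
  rcases le_total r 1 with h | h
  · calc (1 + r) ^ ((d : ℝ) + 1) ≤ 2 ^ ((d:ℝ) + 1) := by
          apply Real.rpow_le_rpow (by linarith) (by linarith) (by positivity)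
      _ = 2 ^ (d + 1) * 1 := by rw [h7, mul_one]
      _ ≤ 2 ^ (d + 1) * ((Nat.factorial n : ℝ) * Real.exp (r ^ α)) := by
          refine mul_le_mul_of_nonneg_left ?_ (by positivity)
          exact one_le_mul_of_one_le_of_one_le hfac1 hexp1
      _ = _ := by ring
  · have h2 : (1 + r) ^ ((d:ℝ)+1) ≤ (2 * r) ^ ((d:ℝ) + 1) :=
      Real.rpow_le_rpow (by linarith) (by linarith) (by positivity)
    have h3 : (2 * r) ^ ((d:ℝ) + 1) = 2 ^ ((d:ℝ)+1) * r ^ ((d:ℝ)+1) :=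
      Real.mul_rpow (by norm_num) (by linarith)
    have h4 : r ^ ((d:ℝ)+1) ≤ r ^ (α * n) := by
      apply Real.rpow_le_rpow_of_exponent_le h
      have hc := Nat.le_ceil (((d : ℝ) + 1) / α)
      calc  (d:ℝ) + 1 = α * (((d:ℝ)+1)/α) := by field_simp
        _ ≤ α * n := mul_le_mul_of_nonneg_left hc hα.le
    have h5 : r ^ (α * (n:ℝ)) = (r ^ α) ^ n := by
      rw [Real.rpow_mul hr, Real.rpow_natCast]
    have h6 : ((r ^ α) ^ n : ℝ) ≤ Nat.factorial n * Real.exp (r ^ α) := by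
      rw [div_le_iff₀ (by positivity)] at hfact; linarith [hfact]
    calc (1 + r) ^ ((d:ℝ)+1) ≤ 2 ^ ((d:ℝ)+1) * r ^ ((d:ℝ)+1) := h2.trans_eq h3
      _ ≤ 2 ^ ((d:ℝ)+1) * ((Nat.factorial n : ℝ) * Real.exp (r ^ α)) := by
          refine mul_le_mul_of_nonneg_left ?_ (by positivity)
          exact (h4.trans_eq h5).trans h6
      _ = _ := by rw [h7]; ring

lemma relAux_integrable {α : ℝ} (hα : 0 < α) (d : ℕ) :
    Integrable (fun x : EuclideanSpace ℝ (Fin d) => Real.exp (-‖x‖ ^ α)) := by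
  set C : ℝ := 2 ^ (d + 1) * Nat.factorial ⌈((d : ℝ) + 1) / α⌉₊ with hC
  have hCpos : 0 < C := by positivity
  have hfinrank : (Module.finrank ℝ (EuclideanSpace ℝ (Fin d)) : ℝ) < (d:ℝ) + 1 := by
    simp [finrank_euclideanSpace_fin]
  have hint : Integrable (fun x : EuclideanSpace ℝ (Fin d) =>
      C * (1 + ‖x‖) ^ (-((d:ℝ) + 1))) :=
    (integrable_one_add_norm hfinrank).const_mul C
  refine hint.mono' ?_ ?_
  · refine (Real.continuous_exp.comp ?_).aestronglyMeasurable
    exact (continuous_norm.rpow_const fun x => Or.inr hα.le).neg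
  · filter_upwards with x
    rw [Real.norm_eq_abs, abs_of_pos (Real.exp_pos _)]
    have h1r : (0:ℝ) < 1 + ‖x‖ := by positivity
    have key := relAux_key hα d (norm_nonneg x)
    rw [Real.exp_neg, Real.rpow_neg h1r.le, ← div_eq_mul_inv, le_div_iff₀ (by positivity),
      inv_mul_le_iff₀ (Real.exp_pos _)]
    rw [mul_comm] at key
    exact key

lemma relAux_density_zero (d : ℕ) (α m t : ℝ) :
    relDensity d α m t 0 = (2 * Real.pi) ^ (-(d : ℝ)) *
      ∫ ξ : EuclideanSpace ℝ (Fin d),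
        Real.exp (-(t * ((‖ξ‖ ^ (2 : ℝ) + m ^ ((2 : ℝ) / α)) ^ (α / 2) - m))) := by
  unfold relDensity
  congr 1
  have h : ∀ ξ : EuclideanSpace ℝ (Fin d),
      Complex.exp (-(Complex.I * ((inner ℝ ξ (0 : EuclideanSpace ℝ (Fin d)) : ℝ) : ℂ)) -
        ((t * ((‖ξ‖ ^ (2 : ℝ) + m ^ ((2 : ℝ) / α)) ^ (α / 2) - m) : ℝ) : ℂ)) =
      (((Real.exp (-(t * ((‖ξ‖ ^ (2 : ℝ) + m ^ ((2 : ℝ) / α)) ^ (α / 2) - m))) : ℝ) : ℂ)) := by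
    intro ξ
    rw [inner_zero_right, Complex.ofReal_exp]
    push_cast
    ring_nf
  simp_rw [h]
  have h2 : ∀ ξ : EuclideanSpace ℝ (Fin d),
      ((Real.exp (-(t * ((‖ξ‖ ^ (2 : ℝ) + m ^ ((2 : ℝ) / α)) ^ (α / 2) - m))) : ℝ) : ℂ)
      = RCLike.ofReal (K := ℂ)
          (Real.exp (-(t * ((‖ξ‖ ^ (2 : ℝ) + m ^ ((2 : ℝ) / α)) ^ (α / 2) - m)))) :=
    fun _ => rfl
  simp_rw [h2]
  rw [integral_ofReal (𝕜 := ℂ)]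
  rfl

lemma relAux_scaling (d : ℕ) {α m : ℝ} (hα₀ : 0 < α) (hm : 0 < m)
    {t : ℝ} (ht : 0 < t) :
    t ^ ((d : ℝ) / α) *
        ∫ ξ : EuclideanSpace ℝ (Fin d),
          Real.exp (-(t * ((‖ξ‖ ^ (2 : ℝ) + m ^ ((2 : ℝ) / α)) ^ (α / 2) - m))) =
      ∫ u : EuclideanSpace ℝ (Fin d),
        Real.exp (t * m - (‖u‖ ^ (2 : ℝ) + t ^ ((2 : ℝ) / α) * m ^ ((2 : ℝ) / α)) ^ (α / 2)) := by
  set E := EuclideanSpace ℝ (Fin d)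
  set f : E → ℝ := fun ξ =>
    Real.exp (-(t * ((‖ξ‖ ^ (2 : ℝ) + m ^ ((2 : ℝ) / α)) ^ (α / 2) - m))) with hf
  set R : ℝ := t ^ ((1 : ℝ) / α) with hR
  have hRpos : 0 < R := Real.rpow_pos_of_pos ht _
  have h1 : ∫ u : E, f (R⁻¹ • u) = (R ^ Module.finrank ℝ E) • ∫ ξ : E, f ξ :=
    Measure.integral_comp_inv_smul_of_nonneg volume f hRpos.le
  have h2 : (R ^ Module.finrank ℝ E : ℝ) = t ^ ((d : ℝ) / α) := by
    rw [finrank_euclideanSpace_fin, hR, ← Real.rpow_natCast (t ^ ((1:ℝ)/α)) d,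
      ← Real.rpow_mul ht.le]
    congr 1
    ring
  have h3 : ∀ u : E, f (R⁻¹ • u) =
      Real.exp (t * m - (‖u‖ ^ (2 : ℝ) + t ^ ((2 : ℝ) / α) * m ^ ((2 : ℝ) / α)) ^ (α / 2)) := by
    intro u
    simp only [hf]
    have hnorm : ‖R⁻¹ • u‖ = R⁻¹ * ‖u‖ := by
      rw [norm_smul, Real.norm_eq_abs, abs_of_pos (by positivity)]
    have e1 : (R⁻¹ * ‖u‖) ^ (2 : ℝ) = t ^ (-((2:ℝ)/α)) * ‖u‖ ^ (2 : ℝ) := by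
      rw [Real.mul_rpow (by positivity) (norm_nonneg u)]
      congr 1
      rw [hR, ← Real.rpow_neg ht.le, ← Real.rpow_mul ht.le]
      congr 1
      ring
    have hX : (0:ℝ) ≤ t ^ (-((2:ℝ)/α)) * ‖u‖ ^ (2 : ℝ) + m ^ ((2:ℝ)/α) := by positivity
    have hT : t = (t ^ ((2:ℝ)/α)) ^ (α/2) := by
      rw [← Real.rpow_mul ht.le, show (2:ℝ)/α*(α/2) = 1 by field_simp, Real.rpow_one]
    have hmain : t * (t ^ (-((2:ℝ)/α)) * ‖u‖ ^ (2 : ℝ) + m ^ ((2:ℝ)/α)) ^ (α/2)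
        = (‖u‖ ^ (2 : ℝ) + t ^ ((2:ℝ)/α) * m ^ ((2:ℝ)/α)) ^ (α/2) := by
      calc t * (t ^ (-((2:ℝ)/α)) * ‖u‖ ^ (2 : ℝ) + m ^ ((2:ℝ)/α)) ^ (α/2)
          = (t ^ ((2:ℝ)/α)) ^ (α/2) *
              (t ^ (-((2:ℝ)/α)) * ‖u‖ ^ (2 : ℝ) + m ^ ((2:ℝ)/α)) ^ (α/2) := by
            rw [← hT]
        _ = (t ^ ((2:ℝ)/α) * (t ^ (-((2:ℝ)/α)) * ‖u‖ ^ (2 : ℝ) + m ^ ((2:ℝ)/α))) ^ (α/2) :=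
            (Real.mul_rpow (by positivity) hX).symm
        _ = (‖u‖ ^ (2 : ℝ) + t ^ ((2:ℝ)/α) * m ^ ((2:ℝ)/α)) ^ (α/2) := by
            congr 1
            rw [mul_add, ← mul_assoc, ← Real.rpow_add ht, add_neg_cancel, Real.rpow_zero,
              one_mul]
    rw [hnorm, e1]
    congr 1
    rw [mul_sub, hmain]
    ring
  simp_rw [h3] at h1
  rw [← h2, ← smul_eq_mul, ← h1]

lemma relAux_tendsto (d : ℕ) {α m : ℝ} (hα₀ : 0 < α) (hm : 0 < m) :
    Filter.Tendsto (fun t : ℝ => ∫ u : EuclideanSpace ℝ (Fin d),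
        Real.exp (t * m - (‖u‖ ^ (2 : ℝ) + t ^ ((2 : ℝ) / α) * m ^ ((2 : ℝ) / α)) ^ (α / 2)))
      (nhdsWithin 0 (Set.Ioi 0))
      (nhds (∫ u : EuclideanSpace ℝ (Fin d), Real.exp (-‖u‖ ^ α))) := by
  set E := EuclideanSpace ℝ (Fin d)
  have hsq : ∀ u : E, (‖u‖ ^ (2:ℝ)) ^ (α/2) = ‖u‖ ^ α := by
    intro u
    rw [← Real.rpow_mul (norm_nonneg u)]
    congr 1
    ring
  refine tendsto_integral_filter_of_dominated_convergence
    (fun u => Real.exp m * Real.exp (-‖u‖ ^ α)) ?_ ?_ ?_ ?_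
  · filter_upwards with t
    refine Continuous.aestronglyMeasurable ?_
    refine Real.continuous_exp.comp ?_
    refine continuous_const.sub ?_
    refine Continuous.rpow_const ?_ fun _ => Or.inr (by positivity)
    exact (continuous_norm.rpow_const fun _ => Or.inr (by norm_num)).add continuous_const
  · filter_upwards [Ioc_mem_nhdsGT_of_mem (by constructor <;> norm_num : (0:ℝ) ∈ Ico 0 1)]
      with t ht
    filter_upwards with u
    rw [Real.norm_eq_abs, abs_of_pos (Real.exp_pos _), ← Real.exp_add]
    apply Real.exp_le_exp.mpr
    have h1 : t * m ≤ m := by nlinarith [ht.1, ht.2]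
    have h2 : ‖u‖ ^ α ≤ (‖u‖ ^ (2:ℝ) + t ^ ((2:ℝ)/α) * m ^ ((2:ℝ)/α)) ^ (α/2) := by
      rw [← hsq u]
      apply Real.rpow_le_rpow (by positivity) (le_add_of_nonneg_right ?_) (by positivity)
      have := ht.1
      positivity
    linarith
  · exact (relAux_integrable hα₀ d).const_mul _
  · filter_upwards with u
    have c1 : ContinuousAt (fun t : ℝ => t ^ ((2:ℝ)/α)) 0 :=
      Real.continuousAt_rpow_const 0 _ (Or.inr (by positivity))
    have c2 : ContinuousAt
        (fun t : ℝ => ‖u‖ ^ (2:ℝ) + t ^ ((2:ℝ)/α) * m ^ ((2:ℝ)/α)) 0 :=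
      continuousAt_const.add (c1.mul continuousAt_const)
    have c5 : ContinuousAt
        (fun t : ℝ => (‖u‖ ^ (2:ℝ) + t ^ ((2:ℝ)/α) * m ^ ((2:ℝ)/α)) ^ (α/2)) 0 :=
      c2.rpow_const (Or.inr (by positivity))
    have c4 : ContinuousAt (fun t : ℝ =>
        Real.exp (t * m - (‖u‖ ^ (2:ℝ) + t ^ ((2:ℝ)/α) * m ^ ((2:ℝ)/α)) ^ (α/2))) 0 :=
      Real.continuous_exp.continuousAt.comp
        ((continuousAt_id.mul continuousAt_const).sub c5)
    have hval : Real.exp ((0:ℝ) * m -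
        (‖u‖ ^ (2:ℝ) + (0:ℝ) ^ ((2:ℝ)/α) * m ^ ((2:ℝ)/α)) ^ (α/2)) = Real.exp (-‖u‖ ^ α) := by
      rw [Real.zero_rpow (ne_of_gt (by positivity)), zero_mul, zero_mul, add_zero, hsq u,
        zero_sub]
    have := c4.tendsto.mono_left (nhdsWithin_le_nhds (s := Set.Ioi (0:ℝ)))
    rwa [hval] at this

lemma relAux_value {α : ℝ} (hα : 0 < α) (d : ℕ) (hd : 0 < d) :
    ∫ u : EuclideanSpace ℝ (Fin d), Real.exp (-‖u‖ ^ α) =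
      Real.sqrt π ^ d * Real.Gamma ((d:ℝ)/α + 1) / Real.Gamma ((d:ℝ)/2 + 1) := by
  haveI : Nonempty (Fin d) := Fin.pos_iff_nonempty.mp hd
  set I : ℝ := ∫ u : EuclideanSpace ℝ (Fin d), Real.exp (-‖u‖ ^ α) with hI
  have hInn : 0 ≤ I := integral_nonneg fun u => (Real.exp_pos _).le
  have h1 := measure_unitBall_eq_integral_div_gamma
    (volume : Measure (EuclideanSpace ℝ (Fin d))) hα
  rw [EuclideanSpace.volume_ball (ι := Fin d) 0 1] at h1
  simp only [ENNReal.ofReal_one, one_pow, one_mul, Fintype.card_fin,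
    finrank_euclideanSpace_fin] at h1
  have hΓa : 0 < Real.Gamma ((d:ℝ)/α + 1) := Real.Gamma_pos_of_pos (by positivity)
  have hΓb : 0 < Real.Gamma ((d:ℝ)/2 + 1) := Real.Gamma_pos_of_pos (by positivity)
  rw [← hI, ENNReal.ofReal_eq_ofReal_iff (by positivity) (by positivity)] at h1
  field_simp at h1 ⊢
  linarith

lemma relAux_const_eq (d : ℕ) (hd : 0 < d) {α : ℝ} (hα : 0 < α) :
    (2 * Real.pi) ^ (-(d : ℝ)) *
        (Real.sqrt π ^ d * Real.Gamma ((d:ℝ)/α + 1) / Real.Gamma ((d:ℝ)/2 + 1)) =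
      (2 * Real.pi ^ ((d : ℝ) / 2) / Real.Gamma ((d : ℝ) / 2)) *
        Real.Gamma ((d : ℝ) / α) / ((2 * Real.pi) ^ d * α) := by
  have hd' : (0:ℝ) < d := by exact_mod_cast hd
  have hsqrt : Real.sqrt π ^ d = π ^ ((d:ℝ)/2) := by
    rw [Real.sqrt_eq_rpow, ← Real.rpow_natCast (π ^ ((1:ℝ)/2)) d, ← Real.rpow_mul Real.pi_pos.le]
    congr 1
    ring
  have hneg : (2 * Real.pi) ^ (-(d : ℝ)) = ((2 * Real.pi) ^ d)⁻¹ := by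
    rw [Real.rpow_neg (by positivity), Real.rpow_natCast]
  have hΓa : Real.Gamma ((d:ℝ)/α + 1) = ((d:ℝ)/α) * Real.Gamma ((d:ℝ)/α) :=
    Real.Gamma_add_one (by positivity)
  have hΓb : Real.Gamma ((d:ℝ)/2 + 1) = ((d:ℝ)/2) * Real.Gamma ((d:ℝ)/2) :=
    Real.Gamma_add_one (by positivity)
  have hΓpos : 0 < Real.Gamma ((d:ℝ)/2) := Real.Gamma_pos_of_pos (by positivity)
  rw [hsqrt, hneg, hΓa, hΓb]
  have hpow : (0:ℝ) < (2 * Real.pi) ^ d := by positivity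
  field_simp

/-- `lim_{t→0⁺} t^{d/α} p^m(t,0) = ω_d Γ(d/α)/((2π)^d α)`, and consequently for any
measurable set `D` of finite Lebesgue measure,
`lim_{t→0⁺} t^{d/α} ∫_D p^m(t,0) dx = |D| ω_d Γ(d/α)/((2π)^d α)`. -/
theorem relDensity_on_diagonal_limit (d : ℕ) (hd : 2 ≤ d) (α : ℝ) (hα₀ : 0 < α)
    (hα₂ : α < 2) (m : ℝ) (hm : 0 < m) :
    Tendsto (fun t : ℝ => t ^ ((d : ℝ) / α) * relDensity d α m t 0)
        (nhdsWithin 0 (Set.Ioi 0))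
        (nhds ((2 * Real.pi ^ ((d : ℝ) / 2) / Real.Gamma ((d : ℝ) / 2)) *
          Real.Gamma ((d : ℝ) / α) / ((2 * Real.pi) ^ d * α)))
      ∧ ∀ D : Set (EuclideanSpace ℝ (Fin d)), MeasurableSet D → volume D < ⊤ →
          Tendsto (fun t : ℝ => t ^ ((d : ℝ) / α) * ∫ _x in D, relDensity d α m t 0)
            (nhdsWithin 0 (Set.Ioi 0))
            (nhds ((volume D).toReal *
              ((2 * Real.pi ^ ((d : ℝ) / 2) / Real.Gamma ((d : ℝ) / 2)) *
                Real.Gamma ((d : ℝ) / α) / ((2 * Real.pi) ^ d * α)))) := by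
  have hd0 : 0 < d := by omega
  have hmain : Tendsto (fun t : ℝ => t ^ ((d : ℝ) / α) * relDensity d α m t 0)
      (nhdsWithin 0 (Set.Ioi 0))
      (nhds ((2 * Real.pi ^ ((d : ℝ) / 2) / Real.Gamma ((d : ℝ) / 2)) *
        Real.Gamma ((d : ℝ) / α) / ((2 * Real.pi) ^ d * α))) := by
    have h1 : Tendsto (fun t : ℝ => (2 * Real.pi) ^ (-(d : ℝ)) *
        ∫ u : EuclideanSpace ℝ (Fin d),
          Real.exp (t * m - (‖u‖ ^ (2 : ℝ) + t ^ ((2 : ℝ) / α) * m ^ ((2 : ℝ) / α)) ^ (α / 2)))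
        (nhdsWithin 0 (Set.Ioi 0))
        (nhds ((2 * Real.pi) ^ (-(d : ℝ)) *
          ∫ u : EuclideanSpace ℝ (Fin d), Real.exp (-‖u‖ ^ α))) :=
      (relAux_tendsto d hα₀ hm).const_mul _
    have heq : (fun t : ℝ => (2 * Real.pi) ^ (-(d : ℝ)) *
        ∫ u : EuclideanSpace ℝ (Fin d),
          Real.exp (t * m - (‖u‖ ^ (2 : ℝ) + t ^ ((2 : ℝ) / α) * m ^ ((2 : ℝ) / α)) ^ (α / 2)))
        =ᶠ[nhdsWithin 0 (Set.Ioi 0)]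
        (fun t : ℝ => t ^ ((d : ℝ) / α) * relDensity d α m t 0) := by
      filter_upwards [self_mem_nhdsWithin] with t ht
      rw [relAux_density_zero, ← relAux_scaling d hα₀ hm ht]
      ring
    have h2 := h1.congr' heq
    have hval : (2 * Real.pi) ^ (-(d : ℝ)) *
        (∫ u : EuclideanSpace ℝ (Fin d), Real.exp (-‖u‖ ^ α)) =
        (2 * Real.pi ^ ((d : ℝ) / 2) / Real.Gamma ((d : ℝ) / 2)) *
          Real.Gamma ((d : ℝ) / α) / ((2 * Real.pi) ^ d * α) := by
      rw [relAux_value hα₀ d hd0]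
      exact relAux_const_eq d hd0 hα₀
    rwa [hval] at h2
  refine ⟨hmain, fun D hD hfin => ?_⟩
  simp only [setIntegral_const, smul_eq_mul, measureReal_def]
  have hfun : (fun t : ℝ => t ^ ((d : ℝ) / α) *
      ((volume D).toReal * relDensity d α m t 0)) =
      fun t : ℝ => (volume D).toReal * (t ^ ((d : ℝ) / α) * relDensity d α m t 0) := by
    funext t
    ring
  rw [hfun]
  exact hmain.const_mul _
end

section
/- Let D be a bounded open set in ℝ^d (d ≥ 2) satisfying the uniform interior and exterior ball conditions with radius r₀ > 0 (equivalently, D is a bounded C^{1,1} open set). Then for every 0 ≤ q < r₀, ((r₀ - q)/r₀)^{d-1} |∂D| ≤ |∂D_q| ≤ (r₀/(r₀ - q))^{d-1} |∂D|. -/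
open MeasureTheory Real Set Metric

/-- `D` satisfies the uniform interior and exterior ball conditions with radius `r₀`:
for every boundary point `z` there are balls of radius `r₀` tangent at `z`, one inside `D`
and one inside the complement of the closure of `D`. -/
def UniformBallCondition {d : ℕ} (D : Set (EuclideanSpace ℝ (Fin d))) (r₀ : ℝ) : Prop :=
  ∀ z ∈ frontier D, ∃ x₀ y₀ : EuclideanSpace ℝ (Fin d),
    x₀ ∈ D ∧ y₀ ∈ (closure D)ᶜ ∧ dist x₀ z = r₀ ∧ dist y₀ z = r₀ ∧
      Metric.ball x₀ r₀ ⊆ D ∧ Metric.ball y₀ r₀ ⊆ (closure D)ᶜ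

open scoped NNReal ENNReal

variable {E : Type*} [NormedAddCommGroup E] [NormedSpace ℝ E]

/-- Disjoint open balls have centers at distance at least the sum of radii. -/
lemma aux_disjoint_balls {x y : E} {r s : ℝ} (hr : 0 < r) (hs : 0 < s)
    (h : Disjoint (ball x r) (ball y s)) : r + s ≤ dist x y := by
  by_contra h'
  push_neg at h'
  set t : ℝ := r / (r + s) with ht
  have hrs : 0 < r + s := by linarith
  have ht0 : 0 < t := div_pos hr hrs
  have ht1 : t < 1 := (div_lt_one hrs).2 (by linarith)
  set p : E := x + t • (y - x) with hp
  have hpx : dist p x < r := by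
    have : p - x = t • (y - x) := by simp [hp]
    rw [dist_eq_norm, this, norm_smul, Real.norm_eq_abs, abs_of_pos ht0]
    calc t * ‖y - x‖ < t * (r + s) := by
          apply mul_lt_mul_of_pos_left _ ht0
          rwa [← dist_eq_norm, dist_comm]
      _ = r := by rw [ht, div_mul_cancel₀ _ (ne_of_gt hrs)]
  have hpy : dist p y < s := by
    have : p - y = (t - 1) • (y - x) := by
      rw [hp]; module
    rw [dist_eq_norm, this, norm_smul, Real.norm_eq_abs, abs_of_neg (by linarith)]
    have h1t : 0 < 1 - t := by linarith
    calc -(t - 1) * ‖y - x‖ = (1 - t) * ‖y - x‖ := by ring_nf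
      _ < (1 - t) * (r + s) := by
          apply mul_lt_mul_of_pos_left _ h1t
          rwa [← dist_eq_norm, dist_comm]
      _ = s := by rw [ht, sub_mul, div_mul_cancel₀ _ (ne_of_gt hrs)]; ring
  exact (h.ne_of_mem (mem_ball.2 hpx) (mem_ball.2 hpy)) rfl

variable {F : Type*} [NormedAddCommGroup F] [InnerProductSpace ℝ F]

/-- From the two-sided ball condition, extract a unit normal field. -/
lemma aux_exists_normal {D : Set F} {r₀ : ℝ} (hr₀ : 0 < r₀)
    (hball : ∀ z ∈ frontier D, ∃ x₀ y₀ : F,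
      x₀ ∈ D ∧ y₀ ∈ (closure D)ᶜ ∧ dist x₀ z = r₀ ∧ dist y₀ z = r₀ ∧
        ball x₀ r₀ ⊆ D ∧ ball y₀ r₀ ⊆ (closure D)ᶜ) :
    ∃ ν : F → F, ∀ z ∈ frontier D, ‖ν z‖ = 1 ∧
      ball (z - r₀ • ν z) r₀ ⊆ D ∧ ball (z + r₀ • ν z) r₀ ⊆ (closure D)ᶜ := by
  classical
  choose! x₀ y₀ _ _ hx₀d hy₀d hbi hbe using hball
  refine ⟨fun z => r₀⁻¹ • (y₀ z - z), fun z hz => ?_⟩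
  have hx₀d := hx₀d z hz; have hy₀d := hy₀d z hz
  have hbi := hbi z hz; have hbe := hbe z hz
  set X := x₀ z; set Y := y₀ z
  have hXY : dist X Y ≥ 2 * r₀ := by
    have hdisj : Disjoint (ball X r₀) (ball Y r₀) :=
      Set.disjoint_left.2 fun p hp hp' => (hbe hp') (subset_closure (hbi hp))
    linarith [aux_disjoint_balls hr₀ hr₀ hdisj]
  have htri : dist X Y ≤ 2 * r₀ := by
    calc dist X Y ≤ dist X z + dist z Y := dist_triangle _ _ _
      _ = 2 * r₀ := by rw [hx₀d, dist_comm z Y, hy₀d]; ring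
  have heq : ‖(X - z) + (z - Y)‖ = ‖X - z‖ + ‖z - Y‖ := by
    have h1 : ‖X - z‖ = r₀ := by rw [← dist_eq_norm]; exact hx₀d
    have h2 : ‖z - Y‖ = r₀ := by rw [← dist_eq_norm, dist_comm]; exact hy₀d
    have : X - z + (z - Y) = X - Y := by abel
    rw [this, ← dist_eq_norm, h1, h2]
    linarith
  have hray : SameRay ℝ (X - z) (z - Y) := sameRay_iff_norm_add.2 heq
  have hXz : X - z ≠ 0 := by
    intro h
    have : dist X z = 0 := by rw [dist_eq_norm, h, norm_zero]
    rw [hx₀d] at this; linarith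
  have hzY : z - Y ≠ 0 := by
    intro h
    have : dist z Y = 0 := by rw [dist_eq_norm, h, norm_zero]
    rw [dist_comm] at this; rw [hy₀d] at this; linarith
  obtain ⟨r₁, r₂, hr₁, hr₂, hsm⟩ := hray.exists_pos hXz hzY
  -- equal norms force r₁ = r₂, hence X - z = z - Y
  have hnorm : r₁ * r₀ = r₂ * r₀ := by
    have := congrArg norm hsm
    rw [norm_smul, norm_smul, Real.norm_eq_abs, Real.norm_eq_abs,
      abs_of_pos hr₁, abs_of_pos hr₂] at this
    have h1 : ‖X - z‖ = r₀ := by rw [← dist_eq_norm]; exact hx₀d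
    have h2 : ‖z - Y‖ = r₀ := by
      rw [← dist_eq_norm]
      rw [dist_comm]; exact hy₀d
    rw [h1, h2] at this; exact this
  have hr12 : r₁ = r₂ := by
    have : r₁ * r₀ = r₂ * r₀ := hnorm
    exact mul_right_cancel₀ (ne_of_gt hr₀) this
  have hXzY : X - z = z - Y := by
    rw [hr12] at hsm
    exact smul_right_injective F (ne_of_gt hr₂) hsm
  have hνnorm : ‖r₀⁻¹ • (Y - z)‖ = 1 := by
    rw [norm_smul, Real.norm_eq_abs, abs_of_pos (inv_pos.2 hr₀)]
    have h2 : ‖Y - z‖ = r₀ := by rw [← dist_eq_norm]; exact hy₀d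
    rw [h2]; field_simp
  have hYz : r₀ • (r₀⁻¹ • (Y - z)) = Y - z := by
    rw [smul_smul, mul_inv_cancel₀ (ne_of_gt hr₀), one_smul]
  refine ⟨hνnorm, ?_, ?_⟩
  · have : z - r₀ • (r₀⁻¹ • (Y - z)) = X := by
      rw [hYz]
      have : X = z - (Y - z) := by
        have := hXzY; abel_nf at this ⊢; linear_combination (norm := abel_nf) this
      rw [this]
    rwa [this]
  · have : z + r₀ • (r₀⁻¹ • (Y - z)) = Y := by rw [hYz]; abel
    rwa [this]

open scoped RealInnerProductSpace

/-- The key quantitative bounds on the normal field. -/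
lemma aux_normal_bounds {D : Set F} (hopen : IsOpen D) {r₀ : ℝ} (hr₀ : 0 < r₀)
    {ν : F → F}
    (hν : ∀ z ∈ frontier D, ‖ν z‖ = 1 ∧
      ball (z - r₀ • ν z) r₀ ⊆ D ∧ ball (z + r₀ • ν z) r₀ ⊆ (closure D)ᶜ)
    {z w : F} (hz : z ∈ frontier D) (hw : w ∈ frontier D) :
    r₀^2 * ‖ν z - ν w‖^2 ≤ ‖z - w‖^2 ∧ |⟪z - w, ν z - ν w⟫| * r₀ ≤ ‖z - w‖^2 := by
  obtain ⟨hn1, hi1, he1⟩ := hν z hz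
  obtain ⟨hn2, hi2, he2⟩ := hν w hw
  have hzD : z ∉ D := fun h => (hopen.frontier_eq ▸ hz).2 h
  have hwD : w ∉ D := fun h => (hopen.frontier_eq ▸ hw).2 h
  have hzcl : z ∈ closure D := (hopen.frontier_eq ▸ hz).1
  have hwcl : w ∈ closure D := (hopen.frontier_eq ▸ hw).1
  set a := z - w with ha
  set n1 := ν z; set n2 := ν w
  have exp : ∀ (t : ℝ) (v : F), ‖a + t • v‖^2 = ‖a‖^2 + 2*t*⟪a,v⟫ + t^2*‖v‖^2 := by
    intro t v
    rw [norm_add_sq_real, real_inner_smul_right, norm_smul]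
    simp only [Real.norm_eq_abs, mul_pow, sq_abs]; ring
  -- w not in the exterior ball at z
  have E1 : r₀ ≤ ‖a + r₀ • n1‖ := by
    by_contra h; push_neg at h
    refine (he1 ?_) hwcl
    rw [mem_ball, dist_eq_norm]
    calc ‖w - (z + r₀ • n1)‖ = ‖-(a + r₀ • n1)‖ := by rw [ha]; congr 1; abel
      _ = ‖a + r₀ • n1‖ := norm_neg _
      _ < r₀ := h
  -- w not in the interior ball at z
  have E2 : r₀ ≤ ‖a + (-r₀) • n1‖ := by
    by_contra h; push_neg at h
    refine hwD (hi1 ?_)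
    rw [mem_ball, dist_eq_norm]
    calc ‖w - (z - r₀ • n1)‖ = ‖-(a + (-r₀) • n1)‖ := by rw [ha]; congr 1; module
      _ = _ := norm_neg _
      _ < r₀ := h
  -- z not in the exterior ball at w
  have E3 : r₀ ≤ ‖a + (-r₀) • n2‖ := by
    by_contra h; push_neg at h
    refine (he2 ?_) hzcl
    rw [mem_ball, dist_eq_norm]
    calc ‖z - (w + r₀ • n2)‖ = ‖a + (-r₀) • n2‖ := by rw [ha]; congr 1; module
      _ < r₀ := h
  -- z not in the interior ball at w
  have E4 : r₀ ≤ ‖a + r₀ • n2‖ := by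
    by_contra h; push_neg at h
    refine hzD (hi2 ?_)
    rw [mem_ball, dist_eq_norm]
    calc ‖z - (w - r₀ • n2)‖ = ‖a + r₀ • n2‖ := by rw [ha]; congr 1; module
      _ < r₀ := h
  -- interior ball at z disjoint from exterior ball at w
  have E5 : 2 * r₀ ≤ ‖a + (-r₀) • (n1 + n2)‖ := by
    have hdisj : Disjoint (ball (z - r₀ • n1) r₀) (ball (w + r₀ • n2) r₀) :=
      Set.disjoint_left.2 fun p hp hp' => (he2 hp') (subset_closure (hi1 hp))
    have := aux_disjoint_balls hr₀ hr₀ hdisj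
    rw [dist_eq_norm] at this
    calc 2 * r₀ = r₀ + r₀ := by ring
      _ ≤ ‖z - r₀ • n1 - (w + r₀ • n2)‖ := this
      _ = ‖a + (-r₀) • (n1 + n2)‖ := by rw [ha]; congr 1; module
  -- interior ball at w disjoint from exterior ball at z
  have E6 : 2 * r₀ ≤ ‖a + r₀ • (n1 + n2)‖ := by
    have hdisj : Disjoint (ball (w - r₀ • n2) r₀) (ball (z + r₀ • n1) r₀) :=
      Set.disjoint_left.2 fun p hp hp' => (he1 hp') (subset_closure (hi2 hp))
    have := aux_disjoint_balls hr₀ hr₀ hdisj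
    rw [dist_eq_norm] at this
    calc 2 * r₀ = r₀ + r₀ := by ring
      _ ≤ ‖w - r₀ • n2 - (z + r₀ • n1)‖ := this
      _ = ‖-(a + r₀ • (n1 + n2))‖ := by rw [ha]; congr 1; module
      _ = _ := norm_neg _
  -- square all the estimates
  have sq_of : ∀ {c x : ℝ}, 0 ≤ c → c ≤ x → c^2 ≤ x^2 := by
    intro c x hc h; nlinarith
  have F1 := (exp r₀ n1) ▸ sq_of hr₀.le E1
  have F2 := (exp (-r₀) n1) ▸ sq_of hr₀.le E2
  have F3 := (exp (-r₀) n2) ▸ sq_of hr₀.le E3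
  have F4 := (exp r₀ n2) ▸ sq_of hr₀.le E4
  have F5 := (exp (-r₀) (n1+n2)) ▸ sq_of (by linarith) E5
  have F6 := (exp r₀ (n1+n2)) ▸ sq_of (by linarith) E6
  rw [hn1] at F1 F2
  rw [hn2] at F3 F4
  have hsum : ‖n1 + n2‖^2 + ‖n1 - n2‖^2 = 4 := by
    rw [norm_add_sq_real, norm_sub_sq_real, hn1, hn2]; ring
  have hinner : ⟪a, n1 + n2⟫ = ⟪a, n1⟫ + ⟪a, n2⟫ := inner_add_right a n1 n2
  have hinner2 : ⟪a, n1 - n2⟫ = ⟪a, n1⟫ - ⟪a, n2⟫ := inner_sub_right a n1 n2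
  rw [hinner] at F5 F6
  constructor
  · nlinarith [F5, F6, hsum]
  · rw [hinner2]
    have hub : (⟪a,n1⟫ - ⟪a,n2⟫) * r₀ ≤ ‖a‖^2 := by nlinarith [F1, F2, F3, F4]
    have hlb : -(‖a‖^2) ≤ (⟪a,n1⟫ - ⟪a,n2⟫) * r₀ := by nlinarith [F1, F2, F3, F4]
    calc |⟪a,n1⟫ - ⟪a,n2⟫| * r₀ = |(⟪a,n1⟫ - ⟪a,n2⟫) * r₀| := by
          rw [abs_mul, abs_of_pos hr₀]
      _ ≤ ‖a‖^2 := abs_le.2 ⟨hlb, hub⟩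

/-- Pure scalar inequalities used for the bi-Lipschitz estimates. -/
lemma aux_scalar {A M P q r₀ : ℝ} (hr₀ : 0 < r₀) (hq0 : 0 ≤ q) (hq : q < r₀)
    (hA0 : 0 ≤ A) (hM0 : 0 ≤ M) (hM : r₀^2 * M ≤ A)
    (hPub : P * r₀ ≤ A) (hPlb : -(P * r₀) ≤ A) (hCS : P^2 ≤ A * M) (hApos : 0 < A) :
    ((r₀ - q)^2 * A) * A ≤ ((A - 2*q*P + q^2*M) * r₀^2) * A ∧
      (A - 2*q*P + q^2*M) * ((r₀ - q)^2 * r₀^2) ≤ r₀^4 * A := by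
  constructor
  · have h1 : (r₀ - q) * A ≤ r₀ * (A - q * P) := by nlinarith [hPub, hq0]
    have h2 : 0 ≤ (r₀ - q) * A := mul_nonneg (by linarith) hA0
    nlinarith [mul_self_le_mul_self h2 h1,
      mul_nonneg (mul_nonneg (sq_nonneg q) (sq_nonneg r₀)) (sub_nonneg.2 hCS)]
  · have t1 : 0 ≤ (q*r₀) * (A + P*r₀) :=
      mul_nonneg (mul_nonneg hq0 hr₀.le) (by linarith)
    have t2 : 0 ≤ q^2 * (A - r₀^2*M) := mul_nonneg (sq_nonneg q) (by linarith)
    have u1 : (A - 2*q*P + q^2*M) * r₀^2 ≤ (r₀ + q)^2 * A := by nlinarith [t1, t2]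
    have hq2 : q^2 ≤ r₀^2 := by nlinarith
    have u2 : (r₀ + q)^2 * (r₀ - q)^2 ≤ r₀^4 := by
      nlinarith [sq_nonneg q, mul_le_mul_of_nonneg_left hq2 (sq_nonneg q)]
    have p1 := mul_le_mul_of_nonneg_right u1 (sq_nonneg (r₀ - q))
    have p2 := mul_le_mul_of_nonneg_right u2 hA0
    nlinarith [p1, p2]

/-- Bi-Lipschitz estimates for the inward translation map on the boundary. -/
lemma aux_phi_bounds {D : Set F} (hopen : IsOpen D) {r₀ : ℝ} (hr₀ : 0 < r₀)
    {ν : F → F}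
    (hν : ∀ z ∈ frontier D, ‖ν z‖ = 1 ∧
      ball (z - r₀ • ν z) r₀ ⊆ D ∧ ball (z + r₀ • ν z) r₀ ⊆ (closure D)ᶜ)
    {q : ℝ} (hq0 : 0 ≤ q) (hq : q < r₀)
    {z w : F} (hz : z ∈ frontier D) (hw : w ∈ frontier D) :
    ((r₀ - q) / r₀) * dist z w ≤ dist (z - q • ν z) (w - q • ν w) ∧
      dist (z - q • ν z) (w - q • ν w) ≤ (r₀ / (r₀ - q)) * dist z w := by
  obtain ⟨hM, hP⟩ := aux_normal_bounds hopen hr₀ hν hz hw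
  have hrq : (0:ℝ) < r₀ - q := by linarith
  set a := z - w with ha
  set m := ν z - ν w with hm
  have hb : (z - q • ν z) - (w - q • ν w) = a - q • m := by rw [ha, hm]; module
  have hbd : dist (z - q • ν z) (w - q • ν w) = ‖a - q • m‖ := by
    rw [dist_eq_norm, hb]
  have had : dist z w = ‖a‖ := by rw [dist_eq_norm]
  rw [hbd, had]
  set A := ‖a‖^2 with hA
  set M := ‖m‖^2 with hM2
  set P := ⟪a, m⟫ with hPdef
  have hexp : ‖a - q • m‖^2 = A - 2*q*P + q^2*M := by
    rw [norm_sub_sq_real, real_inner_smul_right, norm_smul]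
    simp only [Real.norm_eq_abs, mul_pow, sq_abs]
    ring
  have hA0 : 0 ≤ A := sq_nonneg _
  have hM0 : 0 ≤ M := sq_nonneg _
  have hPub : P * r₀ ≤ A := by nlinarith [le_abs_self P, hP]
  have hPlb : -(P * r₀) ≤ A := by nlinarith [neg_abs_le P, hP]
  have hCS : P^2 ≤ A * M := by
    have h := real_inner_mul_inner_self_le a m
    rw [real_inner_self_eq_norm_sq, real_inner_self_eq_norm_sq] at h
    rw [hPdef, hA, hM2]
    nlinarith [h]
  rcases eq_or_ne a 0 with h0 | h0
  · have hz0 : z = w := by rwa [ha, sub_eq_zero] at h0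
    subst hz0
    simp [hm, h0]
  · have hna : ‖a‖ ≠ 0 := norm_ne_zero_iff.2 h0
    have hApos : 0 < A := by rw [hA]; positivity
    clear_value a m A M P
    obtain ⟨key0, keyU⟩ := aux_scalar hr₀ hq0 hq hA0 hM0 hM hPub hPlb hCS hApos
    constructor
    · -- lower bound
      have key1 : (r₀ - q)^2 * A ≤ (A - 2*q*P + q^2*M) * r₀^2 :=
        le_of_mul_le_mul_right key0 hApos
      have e : ((r₀ - q) / r₀ * ‖a‖)^2 * r₀^2 = (r₀ - q)^2 * A := by
        rw [hA]; field_simp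
      have key2 : ((r₀ - q) / r₀ * ‖a‖)^2 ≤ ‖a - q • m‖^2 := by
        rw [hexp]
        have h3 : ((r₀ - q) / r₀ * ‖a‖)^2 * r₀^2 ≤ (A - 2*q*P + q^2*M) * r₀^2 := by
          rw [e]; exact key1
        exact le_of_mul_le_mul_right h3 (by positivity)
      exact le_of_pow_le_pow_left₀ two_ne_zero (norm_nonneg _) key2
    · -- upper bound
      have key0 := keyU
      have e : (r₀ / (r₀ - q) * ‖a‖)^2 * ((r₀ - q)^2 * r₀^2) = r₀^4 * A := by
        rw [hA]; field_simp
      have key2 : ‖a - q • m‖^2 ≤ (r₀ / (r₀ - q) * ‖a‖)^2 := by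
        rw [hexp]
        refine le_of_mul_le_mul_right ?_ (show (0:ℝ) < (r₀ - q)^2 * r₀^2 by positivity)
        rw [e]; exact key0
      have hc0 : 0 ≤ r₀ / (r₀ - q) * ‖a‖ := by positivity
      exact le_of_pow_le_pow_left₀ two_ne_zero hc0 key2

/-- The frontier of the inner parallel set is the image of the frontier under
the inward normal translation. -/
lemma aux_frontier_image [ProperSpace F] {D : Set F} (hopen : IsOpen D)
    {r₀ : ℝ} (hr₀ : 0 < r₀) (hDc : Dᶜ.Nonempty)
    {ν : F → F}
    (hν : ∀ z ∈ frontier D, ‖ν z‖ = 1 ∧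
      ball (z - r₀ • ν z) r₀ ⊆ D ∧ ball (z + r₀ • ν z) r₀ ⊆ (closure D)ᶜ)
    {q : ℝ} (hq0 : 0 ≤ q) (hq : q < r₀) :
    frontier {x ∈ D | q < infDist x Dᶜ} = (fun z => z - q • ν z) '' frontier D := by
  set Dq := {x ∈ D | q < infDist x Dᶜ} with hDq
  have hDqopen : IsOpen Dq := by
    have : Dq = D ∩ {x | q < infDist x Dᶜ} := rfl
    rw [this]
    exact hopen.inter (isOpen_lt continuous_const (continuous_infDist_pt _))
  apply Set.Subset.antisymm
  · -- frontier Dq ⊆ image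
    intro w hw
    rw [hDqopen.frontier_eq] at hw
    obtain ⟨hwcl, hwnot⟩ := hw
    have hge : q ≤ infDist w Dᶜ := by
      have hsub : closure Dq ⊆ {x | q ≤ infDist x Dᶜ} :=
        closure_minimal (fun x hx => le_of_lt hx.2)
          (isClosed_le continuous_const (continuous_infDist_pt _))
      exact hsub hwcl
    have hle : infDist w Dᶜ ≤ q := by
      by_contra h
      push_neg at h
      have hwD : w ∈ D := by
        by_contra hwD
        have : infDist w Dᶜ = 0 := infDist_zero_of_mem hwD
        rw [this] at h; linarith
      exact hwnot ⟨hwD, h⟩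
    have hδ : infDist w Dᶜ = q := le_antisymm hle hge
    have hballw : ball w q ⊆ D := by
      intro p hp
      by_contra hpD
      have := infDist_le_dist_of_mem (show p ∈ Dᶜ from hpD) (x := w)
      rw [hδ] at this
      rw [mem_ball, dist_comm] at hp
      linarith
    have hwclD : w ∈ closure D := closure_mono (fun x hx => hx.1) hwcl
    have hcb : closedBall w q ⊆ closure D := by
      rcases eq_or_lt_of_le hq0 with h0 | hqpos
      · rw [← h0, closedBall_zero]
        exact singleton_subset_iff.2 hwclD
      · rw [← closure_ball w (ne_of_gt hqpos)]
        exact closure_minimal (hballw.trans subset_closure) isClosed_closure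
    obtain ⟨z, hzDc, hzd⟩ :=
      (isClosed_compl_iff.2 hopen).exists_infDist_eq_dist hDc w
    have hdwz : dist w z = q := by rw [← hzd, hδ]
    have hzfr : z ∈ frontier D := by
      rw [hopen.frontier_eq]
      refine ⟨hcb ?_, hzDc⟩
      rw [mem_closedBall, dist_comm, hdwz]
    obtain ⟨hn, hi, he⟩ := hν z hzfr
    set y₀ := z + r₀ • ν z with hy₀
    have hdzy : dist z y₀ = r₀ := by
      rw [hy₀, dist_eq_norm]
      have : z - (z + r₀ • ν z) = -(r₀ • ν z) := by module
      rw [this, norm_neg, norm_smul, Real.norm_eq_abs, abs_of_pos hr₀, hn, mul_one]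
    have h1 : q + r₀ ≤ dist w y₀ := by
      by_contra h
      push_neg at h
      rcases le_or_gt (dist w y₀) q with h2 | h2
      · have hy₀cl : y₀ ∈ closure D := hcb (mem_closedBall'.2 h2)
        exact (he (mem_ball_self hr₀)) hy₀cl
      · set dw := dist w y₀ with hdw
        have hdw0 : 0 < dw := lt_of_le_of_lt hq0 h2
        set p := w + (q / dw) • (y₀ - w) with hp
        have hqdw : 0 ≤ q / dw := div_nonneg hq0 hdw0.le
        have hywn : ‖y₀ - w‖ = dw := by rw [hdw, dist_eq_norm']
        have hp1 : p ∈ closedBall w q := by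
          rw [mem_closedBall, dist_eq_norm]
          have hpe : p - w = (q / dw) • (y₀ - w) := by rw [hp]; module
          rw [hpe, norm_smul, Real.norm_eq_abs, abs_of_nonneg hqdw, hywn]
          rw [div_mul_cancel₀ _ (ne_of_gt hdw0)]
        have hp2 : p ∈ ball y₀ r₀ := by
          rw [mem_ball, dist_eq_norm]
          have hpe : p - y₀ = (q / dw - 1) • (y₀ - w) := by rw [hp]; module
          rw [hpe, norm_smul, Real.norm_eq_abs, hywn]
          have : q / dw - 1 < 0 := by
            rw [sub_neg, div_lt_one hdw0]; exact h2
          rw [abs_of_neg this]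
          have : -(q / dw - 1) * dw = dw - q := by field_simp; ring
          rw [this]; linarith
        exact (he hp2) (hcb hp1)
    have h2 : dist w y₀ ≤ q + r₀ := by
      calc dist w y₀ ≤ dist w z + dist z y₀ := dist_triangle _ _ _
        _ = q + r₀ := by rw [hdwz, hdzy]
    have heq : dist w y₀ = q + r₀ := le_antisymm h2 h1
    -- equality in the triangle inequality: SameRay
    have hray : SameRay ℝ (w - z) (z - y₀) := by
      rw [sameRay_iff_norm_add]
      have e1 : w - z + (z - y₀) = w - y₀ := by abel
      have e2 : ‖w - z‖ = q := by rw [← dist_eq_norm, hdwz]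
      have e3 : ‖z - y₀‖ = r₀ := by rw [← dist_eq_norm, hdzy]
      rw [e1, e2, e3, ← dist_eq_norm, heq]
    refine ⟨z, hzfr, ?_⟩
    show z - q • ν z = w
    have hzy : z - y₀ = -(r₀ • ν z) := by rw [hy₀]; module
    rcases eq_or_lt_of_le hq0 with h0 | hqpos
    · have : w = z := by
        have : dist w z = 0 := by rw [hdwz, ← h0]
        rwa [dist_eq_zero] at this
      rw [this, ← h0, zero_smul, sub_zero]
    · have hwz : w - z ≠ 0 := by
        intro h
        have : dist w z = 0 := by rw [dist_eq_norm, h, norm_zero]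
        rw [hdwz] at this; linarith
      have hzy0 : z - y₀ ≠ 0 := by
        intro h
        have : dist z y₀ = 0 := by rw [dist_eq_norm, h, norm_zero]
        rw [hdzy] at this; linarith
      obtain ⟨r₁, r₂, hr₁, hr₂, hsm⟩ := hray.exists_pos hwz hzy0
      have hnorm : r₁ * q = r₂ * r₀ := by
        have := congrArg norm hsm
        rw [norm_smul, norm_smul, Real.norm_eq_abs, Real.norm_eq_abs,
          abs_of_pos hr₁, abs_of_pos hr₂, ← dist_eq_norm, ← dist_eq_norm,
          hdwz, hdzy] at this
        exact this
      have hwzeq : w - z = (r₁⁻¹ * r₂) • (z - y₀) := by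
        rw [← smul_smul]
        rw [← hsm, smul_smul, inv_mul_cancel₀ (ne_of_gt hr₁), one_smul]
      rw [hzy] at hwzeq
      have hcoef : r₁⁻¹ * r₂ * r₀ = q := by
        field_simp
        linarith [hnorm]
      have hwz2 : w - z = -(q • ν z) := by
        rw [hwzeq, smul_neg, smul_smul, hcoef]
      have hfin : w = -(q • ν z) + z := by rw [← sub_eq_iff_eq_add]; exact hwz2
      rw [hfin]; module
  · -- image ⊆ frontier Dq
    rintro u ⟨z, hz, rfl⟩
    obtain ⟨hn, hi, he⟩ := hν z hz
    have hzD : z ∉ D := (hopen.frontier_eq ▸ hz).2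
    have hzDc : z ∈ Dᶜ := hzD
    have hg : ∀ t : ℝ, 0 < t → t ≤ r₀ →
        (z - t • ν z ∈ D ∧ t ≤ infDist (z - t • ν z) Dᶜ) := by
      intro t ht0 htr
      have hdist : dist (z - t • ν z) (z - r₀ • ν z) = r₀ - t := by
        rw [dist_eq_norm]
        have e : (z - t • ν z) - (z - r₀ • ν z) = (r₀ - t) • ν z := by module
        rw [e, norm_smul, Real.norm_eq_abs, abs_of_nonneg (by linarith), hn, mul_one]
      have hmem : z - t • ν z ∈ D := hi (by rw [mem_ball, hdist]; linarith)
      have hsub : ball (z - t • ν z) t ⊆ D := by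
        refine (ball_subset_ball' ?_).trans hi
        rw [hdist]; linarith
      refine ⟨hmem, ?_⟩
      by_contra hcon
      push_neg at hcon
      obtain ⟨p, hpDc, hpd⟩ := (infDist_lt_iff hDc).1 hcon
      exact hpDc (hsub (mem_ball'.2 hpd))
    have hd : dist (z - q • ν z) z = q := by
      rw [dist_eq_norm]
      have e : (z - q • ν z) - z = -(q • ν z) := by module
      rw [e, norm_neg, norm_smul, Real.norm_eq_abs, abs_of_nonneg hq0, hn, mul_one]
    have hnotin : z - q • ν z ∉ Dq := by
      intro hmem
      have h2 := infDist_le_dist_of_mem hzDc (x := z - q • ν z)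
      rw [hd] at h2
      have := hmem.2
      change q < infDist (z - q • ν z) Dᶜ at this
      linarith [this]
    have hclo : z - q • ν z ∈ closure Dq := by
      rw [Metric.mem_closure_iff]
      intro ε hε
      have h1 : 0 < min (ε/2) ((r₀ - q)/2) := lt_min (by linarith) (by linarith)
      set t := q + min (ε/2) ((r₀ - q)/2) with htdef
      have ht0 : 0 < t := by rw [htdef]; linarith
      have htr : t ≤ r₀ := by
        have := min_le_right (ε/2) ((r₀ - q)/2); rw [htdef]; linarith
      have htq : q < t := by rw [htdef]; linarith
      obtain ⟨hmem, hinf⟩ := hg t ht0 htr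
      refine ⟨z - t • ν z, ⟨hmem, lt_of_lt_of_le htq hinf⟩, ?_⟩
      have e : dist (z - q • ν z) (z - t • ν z) = t - q := by
        rw [dist_eq_norm]
        have e2 : (z - q • ν z) - (z - t • ν z) = (t - q) • ν z := by module
        rw [e2, norm_smul, Real.norm_eq_abs, abs_of_nonneg (by linarith), hn, mul_one]
      rw [e]
      have := min_le_left (ε/2) ((r₀ - q)/2)
      rw [htdef]; linarith
    rw [hDqopen.frontier_eq]
    exact ⟨hclo, hnotin⟩

/-- For a bounded `C^{1,1}` open set (uniform interior/exterior ball radius `r₀`) and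
`0 ≤ q < r₀`, `((r₀-q)/r₀)^{d-1}|∂D| ≤ |∂D_q| ≤ (r₀/(r₀-q))^{d-1}|∂D|`,
where `D_q = {x ∈ D : δ_D(x) > q}`. -/
theorem surface_measure_parallel_set_bounds (d : ℕ) (hd : 2 ≤ d)
    (D : Set (EuclideanSpace ℝ (Fin d))) (hopen : IsOpen D)
    (hbdd : Bornology.IsBounded D) (r₀ : ℝ) (hr₀ : 0 < r₀)
    (hball : UniformBallCondition D r₀) (q : ℝ) (hq0 : 0 ≤ q) (hq : q < r₀) :
    ((r₀ - q) / r₀) ^ (d - 1) * (μH[(d : ℝ) - 1] (frontier D)).toReal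
        ≤ (μH[(d : ℝ) - 1] (frontier {x ∈ D | q < Metric.infDist x Dᶜ})).toReal
      ∧ (μH[(d : ℝ) - 1] (frontier {x ∈ D | q < Metric.infDist x Dᶜ})).toReal
          ≤ (r₀ / (r₀ - q)) ^ (d - 1) * (μH[(d : ℝ) - 1] (frontier D)).toReal := by
  classical
  have hrq : (0:ℝ) < r₀ - q := by linarith
  have hDc : Dᶜ.Nonempty := by
    by_contra h
    rw [Set.not_nonempty_iff_eq_empty, Set.compl_empty_iff] at h
    haveI : Nontrivial (EuclideanSpace ℝ (Fin d)) := by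
      refine ⟨⟨EuclideanSpace.single ⟨0, by omega⟩ 1, 0, ?_⟩⟩
      intro hcontr
      have := congrArg (fun v => v ⟨0, by omega⟩) hcontr
      simp [EuclideanSpace.single_apply] at this
    exact NormedSpace.unbounded_univ ℝ _ (h ▸ hbdd)
  obtain ⟨ν, hν⟩ := aux_exists_normal hr₀ hball
  set Φ : EuclideanSpace ℝ (Fin d) → EuclideanSpace ℝ (Fin d) :=
    fun z => z - q • ν z with hΦ
  have himg : frontier {x ∈ D | q < infDist x Dᶜ} = Φ '' frontier D :=
    aux_frontier_image hopen hr₀ hDc hν hq0 hq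
  set K : ℝ≥0 := Real.toNNReal (r₀ / (r₀ - q)) with hK
  have hKcoe : (K : ℝ) = r₀ / (r₀ - q) := Real.coe_toNNReal _ (by positivity)
  have hlipΦ : LipschitzOnWith K Φ (frontier D) := by
    apply LipschitzOnWith.of_dist_le_mul
    intro x hx y hy
    rw [hKcoe]
    exact (aux_phi_bounds hopen hr₀ hν hq0 hq hx hy).2
  set Ψ : EuclideanSpace ℝ (Fin d) → EuclideanSpace ℝ (Fin d) :=
    fun w => if h : ∃ z ∈ frontier D, Φ z = w then h.choose else w with hΨ
  have hΨspec : ∀ w ∈ Φ '' frontier D, Ψ w ∈ frontier D ∧ Φ (Ψ w) = w := by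
    intro w hw
    obtain ⟨z, hz, hzw⟩ := hw
    have hex : ∃ z ∈ frontier D, Φ z = w := ⟨z, hz, hzw⟩
    rw [hΨ]
    simp only [dif_pos hex]
    exact ⟨hex.choose_spec.1, hex.choose_spec.2⟩
  have hlipΨ : LipschitzOnWith K Ψ (Φ '' frontier D) := by
    apply LipschitzOnWith.of_dist_le_mul
    intro x hx y hy
    obtain ⟨hx1, hx2⟩ := hΨspec x hx
    obtain ⟨hy1, hy2⟩ := hΨspec y hy
    have hlow := (aux_phi_bounds hopen hr₀ hν hq0 hq hx1 hy1).1
    have e1 : Ψ x - q • ν (Ψ x) = x := hx2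
    have e2 : Ψ y - q • ν (Ψ y) = y := hy2
    rw [e1, e2] at hlow
    rw [hKcoe]
    have h2 : (r₀ - q) * dist (Ψ x) (Ψ y) ≤ r₀ * dist x y := by
      have h3 := mul_le_mul_of_nonneg_left hlow hr₀.le
      calc (r₀ - q) * dist (Ψ x) (Ψ y)
          = r₀ * ((r₀ - q) / r₀ * dist (Ψ x) (Ψ y)) := by field_simp
        _ ≤ r₀ * dist x y := h3
    rw [div_mul_eq_mul_div, le_div_iff₀ hrq]
    linarith
  have hsub : frontier D ⊆ Ψ '' (Φ '' frontier D) := by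
    intro z hz
    refine ⟨Φ z, ⟨z, hz, rfl⟩, ?_⟩
    obtain ⟨h1, h2⟩ := hΨspec (Φ z) ⟨z, hz, rfl⟩
    have hlow := (aux_phi_bounds hopen hr₀ hν hq0 hq h1 hz).1
    have e1 : Ψ (Φ z) - q • ν (Ψ (Φ z)) = Φ z := h2
    have e2 : z - q • ν z = Φ z := rfl
    rw [e1, e2, dist_self] at hlow
    have hd0 : dist (Ψ (Φ z)) z = 0 := by
      have hc : 0 < (r₀ - q)/r₀ := by positivity
      nlinarith [dist_nonneg (x := Ψ (Φ z)) (y := z)]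
    rwa [dist_eq_zero] at hd0
  -- measure estimates
  have hs0 : (0:ℝ) ≤ (d:ℝ) - 1 := by
    have : (2:ℝ) ≤ (d:ℝ) := by exact_mod_cast hd
    linarith
  have hscast : (d:ℝ) - 1 = ((d - 1 : ℕ) : ℝ) := by
    have h1 : 1 ≤ d := by omega
    push_cast [Nat.cast_sub h1]
    ring
  have hpowcast : ((K:ℝ≥0∞) ^ ((d:ℝ) - 1)) = ((K:ℝ≥0∞) ^ (d - 1 : ℕ)) := by
    rw [hscast, ENNReal.rpow_natCast]
  have hfin : ((K:ℝ≥0∞) ^ (d - 1 : ℕ)) ≠ ⊤ := by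
    rw [← ENNReal.coe_pow]
    exact ENNReal.coe_ne_top
  have hKtoReal : (((K:ℝ≥0∞) ^ (d - 1 : ℕ))).toReal = (r₀ / (r₀ - q)) ^ (d - 1) := by
    rw [ENNReal.toReal_pow, ENNReal.coe_toReal, hKcoe]
  set A := μH[(d : ℝ) - 1] (frontier D) with hA
  set B := μH[(d : ℝ) - 1] (frontier {x ∈ D | q < infDist x Dᶜ}) with hB
  have hBA : B ≤ (K:ℝ≥0∞) ^ (d - 1 : ℕ) * A := by
    rw [hB, himg, ← hpowcast]
    exact hlipΦ.hausdorffMeasure_image_le hs0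
  have hAB : A ≤ (K:ℝ≥0∞) ^ (d - 1 : ℕ) * B := by
    rw [hA, hB, himg, ← hpowcast]
    calc μH[(d : ℝ) - 1] (frontier D)
        ≤ μH[(d : ℝ) - 1] (Ψ '' (Φ '' frontier D)) := measure_mono hsub
      _ ≤ (K:ℝ≥0∞) ^ ((d:ℝ) - 1) * μH[(d : ℝ) - 1] (Φ '' frontier D) :=
          hlipΨ.hausdorffMeasure_image_le hs0
  have hcpos : (0:ℝ) < (r₀ / (r₀ - q)) ^ (d - 1) := by positivity
  have hcc : ((r₀ - q) / r₀) ^ (d - 1) * (r₀ / (r₀ - q)) ^ (d - 1) = 1 := by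
    rw [← mul_pow]
    have : (r₀ - q) / r₀ * (r₀ / (r₀ - q)) = 1 := by field_simp
    rw [this, one_pow]
  rcases eq_or_ne A ⊤ with hAtop | hAtop
  · have hBtop : B = ⊤ := by
      by_contra hBtop
      have : (K:ℝ≥0∞) ^ (d - 1 : ℕ) * B ≠ ⊤ := ENNReal.mul_ne_top hfin hBtop
      rw [hAtop] at hAB
      exact this (top_le_iff.1 hAB)
    rw [hAtop, hBtop]
    simp
  · have hBtop : B ≠ ⊤ :=
      ne_top_of_le_ne_top (ENNReal.mul_ne_top hfin hAtop) hBA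
    have h2 : B.toReal ≤ (r₀ / (r₀ - q)) ^ (d - 1) * A.toReal := by
      have := ENNReal.toReal_mono (ENNReal.mul_ne_top hfin hAtop) hBA
      rwa [ENNReal.toReal_mul, hKtoReal] at this
    have h3 : A.toReal ≤ (r₀ / (r₀ - q)) ^ (d - 1) * B.toReal := by
      have := ENNReal.toReal_mono (ENNReal.mul_ne_top hfin hBtop) hAB
      rwa [ENNReal.toReal_mul, hKtoReal] at this
    refine ⟨?_, h2⟩
    have hcpos2 : (0:ℝ) ≤ ((r₀ - q) / r₀) ^ (d - 1) := by positivity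
    calc ((r₀ - q) / r₀) ^ (d - 1) * A.toReal
        ≤ ((r₀ - q) / r₀) ^ (d - 1) * ((r₀ / (r₀ - q)) ^ (d - 1) * B.toReal) :=
          mul_le_mul_of_nonneg_left h3 hcpos2
      _ = B.toReal := by rw [← mul_assoc, hcc, one_mul]
end
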